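/- arXiv:2502.02360 — 3 statements merged into one kernel-verified Lean document; each statement's English description precedes it below -/
import Mathlib

section
/- Let A be an FDDS and k ≥ 1 an integer. The monomial A X^k is injective up to isomorphism (i.e., for all FDDS X, Y, A × X^k ≅ A × Y^k implies X ≅ Y) if and only if A is cancelable. -/
/-- Isomorphism of finite dynamical systems: a bijection commuting with the maps. -/
def FddsIso {α β : Type} (f : α → α) (g : β → β) : Prop :=
  ∃ e : α ≃ β, ⇑e ∘ f = g ∘ ⇑e

/-- A state is periodic if some positive iterate fixes it. -/
def IsPeriodicState {α : Type} (f : α → α) (x : α) : Prop :=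
  ∃ n > 0, f^[n] x = x

/-- The vertex set of the unroll of `(α, f)`. -/
def UnrollSet {α : Type} (f : α → α) : Set (α × ℕ) :=
  {p | IsPeriodicState f (f^[p.2] p.1)}

/-- The parent map of the unroll. -/
def unrollMap {α : Type} (f : α → α) (q : UnrollSet f) : UnrollSet f :=
  if h : q.1.2 = 0 then q
  else ⟨(f q.1.1, q.1.2 - 1), by
    obtain ⟨⟨x, k⟩, hq⟩ := q
    simp only at h
    obtain ⟨k', rfl⟩ := Nat.exists_eq_succ_of_ne_zero h
    simpa [UnrollSet, Function.iterate_succ_apply] using hq⟩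

/-- Isomorphism of unrolls. -/
def UnrollIso {α β : Type} (f : α → α) (g : β → β) : Prop :=
  ∃ φ : UnrollSet f ≃ UnrollSet g, ⇑φ ∘ unrollMap f = unrollMap g ∘ ⇑φ

/-- Vertices of the cut at depth `n` of the unroll. -/
def CutSet {α : Type} (f : α → α) (n : ℕ) : Set (α × ℕ) :=
  {p | p ∈ UnrollSet f ∧ p.2 ≤ n}

/-- The parent map of the cut at depth `n`. -/
def cutMap {α : Type} (f : α → α) (n : ℕ) (q : CutSet f n) : CutSet f n :=
  if h : q.1.2 = 0 then q
  else ⟨(f q.1.1, q.1.2 - 1), by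
    obtain ⟨⟨x, k⟩, hq⟩ := q
    obtain ⟨hq1, hq2⟩ := hq
    simp only at h hq2 ⊢
    obtain ⟨k', rfl⟩ := Nat.exists_eq_succ_of_ne_zero h
    refine ⟨by simpa [UnrollSet, Function.iterate_succ_apply] using hq1, by omega⟩⟩

/-- Isomorphism of cuts at depth `n`. -/
def CutIso {α β : Type} (f : α → α) (g : β → β) (n : ℕ) : Prop :=
  ∃ φ : CutSet f n ≃ CutSet g n, ⇑φ ∘ cutMap f n = cutMap g n ∘ ⇑φ

/-- The states of the components whose cycle length divides `p`. -/
def DivSet {α : Type} (f : α → α) (p : ℕ) : Set α :=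
  {x | ∃ N, f^[N + p] x = f^[N] x}

/-- The restriction of `f` to `DivSet f p`. -/
def divMap {α : Type} (f : α → α) (p : ℕ) (q : DivSet f p) : DivSet f p :=
  ⟨f q.1, by
    obtain ⟨x, N, hN⟩ := q
    exact ⟨N, by
      rw [← Function.iterate_succ_apply, ← Function.iterate_succ_apply,
        Function.iterate_succ_apply', Function.iterate_succ_apply', hN]⟩⟩

/-- `k`-th power of an FDDS: map on `Fin k → α`. -/
def powMap {α : Type} (f : α → α) (k : ℕ) (v : Fin k → α) : Fin k → α := f ∘ v

/-- Evaluation of the polynomial `Σ_{i=0}^m A_i X^i` at `(α, f)`. -/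
def polyEval {m : ℕ} {γ : Fin (m + 1) → Type} (g : ∀ i, γ i → γ i)
    {α : Type} (f : α → α)
    (x : Σ i : Fin (m + 1), γ i × (Fin i.val → α)) :
    Σ i : Fin (m + 1), γ i × (Fin i.val → α) :=
  ⟨x.1, g x.1 x.2.1, f ∘ x.2.2⟩

/-- Evaluation of the constant-free polynomial `Σ_{i=1}^m A_i X^i` at `(α, f)`. -/
def polyEvalNC {m : ℕ} {γ : Fin m → Type} (g : ∀ i, γ i → γ i)
    {α : Type} (f : α → α)
    (x : Σ i : Fin m, γ i × (Fin (i.val + 1) → α)) :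
    Σ i : Fin m, γ i × (Fin (i.val + 1) → α) :=
  ⟨x.1, g x.1 x.2.1, f ∘ x.2.2⟩

/-- An FDDS is cancelable if it can be canceled from products. -/
def Cancelable {α : Type} (f : α → α) : Prop :=
  ∀ (β γ : Type) [Fintype β] [Fintype γ] (g : β → β) (h : γ → γ),
    FddsIso (Prod.map f g) (Prod.map f h) → FddsIso g h

namespace MIC

open Function

theorem iso_refl {α : Type} (f : α → α) : FddsIso f f := ⟨Equiv.refl α, rfl⟩

theorem iso_symm {α β : Type} {f : α → α} {g : β → β} (h : FddsIso f g) : FddsIso g f := by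
  obtain ⟨e, he⟩ := h
  refine ⟨e.symm, funext fun x => ?_⟩
  have := congrFun he (e.symm x)
  simp only [comp_apply, Equiv.apply_symm_apply] at this ⊢
  rw [← this, Equiv.symm_apply_apply]

theorem iso_trans {α β γ : Type} {f : α → α} {g : β → β} {h : γ → γ}
    (h1 : FddsIso f g) (h2 : FddsIso g h) : FddsIso f h := by
  obtain ⟨e1, he1⟩ := h1
  obtain ⟨e2, he2⟩ := h2
  refine ⟨e1.trans e2, funext fun x => ?_⟩
  simp only [comp_apply, Equiv.trans_apply]
  have h1 := congrFun he1 x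
  have h2 := congrFun he2 (e1 x)
  simp only [comp_apply] at h1 h2
  rw [h1, h2]

theorem iso_prod_congr {α β γ δ : Type} {f : α → α} {g : β → β} {f' : γ → γ} {g' : δ → δ}
    (h1 : FddsIso f f') (h2 : FddsIso g g') :
    FddsIso (Prod.map f g) (Prod.map f' g') := by
  obtain ⟨e1, he1⟩ := h1
  obtain ⟨e2, he2⟩ := h2
  refine ⟨Equiv.prodCongr e1 e2, funext fun x => ?_⟩
  simp only [comp_apply, Equiv.prodCongr_apply, Prod.map_apply, Prod.map]
  exact Prod.ext (congrFun he1 x.1) (congrFun he2 x.2)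

theorem iso_prod_comm {α β : Type} (f : α → α) (g : β → β) :
    FddsIso (Prod.map f g) (Prod.map g f) :=
  ⟨Equiv.prodComm α β, rfl⟩

theorem iso_prod_assoc {α β γ : Type} (f : α → α) (g : β → β) (h : γ → γ) :
    FddsIso (Prod.map (Prod.map f g) h) (Prod.map f (Prod.map g h)) :=
  ⟨Equiv.prodAssoc α β γ, rfl⟩

theorem iso_pow_succ {α : Type} (f : α → α) (n : ℕ) :
    FddsIso (powMap f (n + 1)) (Prod.map f (powMap f n)) := by
  refine ⟨(Fin.consEquiv fun _ => α).symm, funext fun v => ?_⟩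
  rfl

theorem iso_pow_zero {α β : Type} (f : α → α) (g : β → β) :
    FddsIso (powMap f 0) (powMap g 0) := by
  refine ⟨Equiv.ofUnique (Fin 0 → α) (Fin 0 → β), funext fun v => Subsingleton.elim _ _⟩

end MIC

namespace MIC

theorem prod_pow_congr {α β γ : Type} (a : α → α) (g : β → β) (h : γ → γ)
    (H : FddsIso (Prod.map a g) (Prod.map a h)) (n : ℕ) :
    FddsIso (Prod.map a (powMap g n)) (Prod.map a (powMap h n)) := by
  induction n with
  | zero => exact iso_prod_congr (iso_refl a) (iso_pow_zero g h)
  | succ n ih =>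
    -- A × B^{n+1} ≅ A × (B × B^n)
    have s1 : FddsIso (Prod.map a (powMap g (n+1))) (Prod.map a (Prod.map g (powMap g n))) :=
      iso_prod_congr (iso_refl a) (iso_pow_succ g n)
    -- ≅ (A × B) × B^n
    have s2 := iso_symm (iso_prod_assoc a g (powMap g n))
    -- ≅ (A × C) × B^n
    have s3 := iso_prod_congr H (iso_refl (powMap g n))
    -- ≅ A × (C × B^n)
    have s4 := iso_prod_assoc a h (powMap g n)
    -- ≅ A × (B^n × C)
    have s5 := iso_prod_congr (iso_refl a) (iso_prod_comm h (powMap g n))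
    -- ≅ (A × B^n) × C
    have s6 := iso_symm (iso_prod_assoc a (powMap g n) h)
    -- ≅ (A × C^n) × C
    have s7 := iso_prod_congr ih (iso_refl h)
    -- ≅ A × (C^n × C)
    have s8 := iso_prod_assoc a (powMap h n) h
    -- ≅ A × (C × C^n)
    have s9 := iso_prod_congr (iso_refl a) (iso_prod_comm (powMap h n) h)
    -- ≅ A × C^{n+1}
    have s10 := iso_prod_congr (iso_refl a) (iso_symm (iso_pow_succ h n))
    exact iso_trans s1 (iso_trans s2 (iso_trans s3 (iso_trans s4 (iso_trans s5
      (iso_trans s6 (iso_trans s7 (iso_trans s8 (iso_trans s9 s10))))))))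

end MIC

namespace MIC

def IsHom {γ α : Type} (c : γ → γ) (f : α → α) (h : γ → α) : Prop :=
  ∀ z, h (c z) = f (h z)

noncomputable def homC {γ α : Type} (c : γ → γ) (f : α → α) : ℕ :=
  Nat.card {h : γ → α // IsHom c f h}

noncomputable def injC {γ α : Type} (c : γ → γ) (f : α → α) : ℕ :=
  Nat.card {h : γ → α // IsHom c f h ∧ Function.Injective h}

theorem homC_pow {γ α : Type} [Finite γ] (c : γ → γ) (f : α → α) (k : ℕ) :
    homC c (powMap f k) = homC c f ^ k := by
  have e : {h : γ → (Fin k → α) // IsHom c (powMap f k) h} ≃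
      (Fin k → {h : γ → α // IsHom c f h}) := by
    refine ⟨fun H i => ⟨fun z => H.1 z i, fun z => congrFun (H.2 z) i⟩,
      fun G => ⟨fun z i => (G i).1 z, fun z => funext fun i => (G i).2 z⟩, ?_, ?_⟩
    · intro H; rfl
    · intro G; rfl
  rw [homC, Nat.card_congr e, Nat.card_fun, Nat.card_eq_fintype_card (α := Fin k), Fintype.card_fin]
  rfl

theorem homC_target_iso {γ α β : Type} (c : γ → γ) {f : α → α} {g : β → β}
    (H : FddsIso f g) : homC c f = homC c g := by
  obtain ⟨e, he⟩ := H
  refine Nat.card_congr ⟨fun h => ⟨⇑e ∘ h.1, fun z => ?_⟩,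
    fun h => ⟨⇑e.symm ∘ h.1, fun z => ?_⟩, fun h => ?_, fun h => ?_⟩
  · simp only [Function.comp_apply, h.2 z]
    exact congrFun he (h.1 z)
  · simp only [Function.comp_apply, h.2 z]
    have := congrFun he (e.symm (h.1 z))
    simp only [Function.comp_apply, Equiv.apply_symm_apply] at this
    rw [← this, Equiv.symm_apply_apply]
  · apply Subtype.ext; funext z; simp
  · apply Subtype.ext; funext z; simp

theorem injC_source_iso {γ δ α : Type} {c : γ → γ} {d : δ → δ} (f : α → α)
    (H : FddsIso c d) : injC c f = injC d f := by
  obtain ⟨e, he⟩ := H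
  refine Nat.card_congr ⟨fun h => ⟨h.1 ∘ ⇑e.symm, fun z => ?_, h.2.2.comp e.symm.injective⟩,
    fun h => ⟨h.1 ∘ ⇑e, fun z => ?_, h.2.2.comp e.injective⟩, fun h => ?_, fun h => ?_⟩
  · have h2 := h.2.1 (e.symm z)
    have := congrFun he (e.symm z)
    simp only [Function.comp_apply, Equiv.apply_symm_apply] at this ⊢
    rw [show d z = e (c (e.symm z)) by rw [this], Equiv.symm_apply_apply, h2]
  · have h2 := h.2.1 (e z)
    have := congrFun he z
    simp only [Function.comp_apply] at this ⊢
    rw [this, h2]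
  · apply Subtype.ext; funext z; simp
  · apply Subtype.ext; funext z; simp

def CompatSetoid (γ : Type) (c : γ → γ) : Type :=
  {s : Setoid γ // ∀ a b, s.r a b → s.r (c a) (c b)}

instance setoidFinite (γ : Type) [Finite γ] : Finite (Setoid γ) :=
  Finite.of_injective (fun s => s.r)
    (fun s t h => Setoid.ext fun a b => by rw [show s.r = t.r from h])

instance compatFinite (γ : Type) [Finite γ] (c : γ → γ) : Finite (CompatSetoid γ c) :=
  Subtype.finite

noncomputable def quotMap {γ : Type} (c : γ → γ) (s : CompatSetoid γ c) :
    Quotient s.1 → Quotient s.1 :=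
  Quotient.lift (fun z => Quotient.mk s.1 (c z))
    (fun a b h => Quotient.sound (s.2 a b h))

end MIC

namespace MIC

noncomputable def injFam {γ α : Type} (c : γ → γ) (f : α → α) (s : CompatSetoid γ c) : Type :=
  {j : Quotient s.1 → α // IsHom (quotMap c s) f j ∧ Function.Injective j}

instance injFamFinite {γ α : Type} [Finite γ] [Finite α] (c : γ → γ) (f : α → α)
    (s : CompatSetoid γ c) : Finite (injFam c f s) := by
  have : Finite (Quotient s.1) := Finite.of_surjective _ Quotient.mk_surjective
  unfold injFam
  exact Subtype.finite

noncomputable def toHom {γ α : Type} (c : γ → γ) (f : α → α)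
    (x : Σ s : CompatSetoid γ c, injFam c f s) : {h : γ → α // IsHom c f h} :=
  ⟨x.2.1 ∘ Quotient.mk x.1.1, fun z => x.2.2.1 (Quotient.mk x.1.1 z)⟩

theorem toHom_bijective {γ α : Type} (c : γ → γ) (f : α → α) :
    Function.Bijective (toHom c f) := by
  constructor
  · rintro ⟨s, j⟩ ⟨t, j'⟩ hxy
    have hfun : j.1 ∘ Quotient.mk s.1 = j'.1 ∘ Quotient.mk t.1 :=
      congrArg Subtype.val hxy
    have hst : s = t := by
      apply Subtype.ext
      apply Setoid.ext
      intro a b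
      constructor
      · intro hab
        have : j.1 (Quotient.mk s.1 a) = j.1 (Quotient.mk s.1 b) :=
          congrArg j.1 (Quotient.sound hab)
        rw [show j.1 (Quotient.mk s.1 a) = j'.1 (Quotient.mk t.1 a) from congrFun hfun a,
          show j.1 (Quotient.mk s.1 b) = j'.1 (Quotient.mk t.1 b) from congrFun hfun b] at this
        exact Quotient.exact (j'.2.2 this)
      · intro hab
        have : j'.1 (Quotient.mk t.1 a) = j'.1 (Quotient.mk t.1 b) :=
          congrArg j'.1 (Quotient.sound hab)
        rw [← show j.1 (Quotient.mk s.1 a) = j'.1 (Quotient.mk t.1 a) from congrFun hfun a,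
          ← show j.1 (Quotient.mk s.1 b) = j'.1 (Quotient.mk t.1 b) from congrFun hfun b] at this
        exact Quotient.exact (j.2.2 this)
    subst hst
    have hj : j = j' := by
      apply Subtype.ext
      funext q
      induction q using Quotient.ind with
      | _ a => exact congrFun hfun a
    rw [hj]
  · rintro ⟨h, hh⟩
    refine ⟨⟨⟨Setoid.ker h, fun a b hab => ?_⟩,
      Quotient.lift h (fun a b hab => hab), ?_, ?_⟩, ?_⟩
    · show h (c a) = h (c b)
      rw [hh a, hh b, hab]
    · intro q
      induction q using Quotient.ind with
      | _ a => exact hh a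
    · intro q q'
      induction q using Quotient.ind with
      | _ a =>
        induction q' using Quotient.ind with
        | _ b => exact fun hab => Quotient.sound hab
    · rfl

theorem nat_card_sigma {ι : Type} [Fintype ι] (F : ι → Type) [∀ i, Finite (F i)] :
    Nat.card (Σ i, F i) = ∑ i, Nat.card (F i) := by
  letI := fun i => Fintype.ofFinite (F i)
  simp only [Nat.card_eq_fintype_card]
  exact Fintype.card_sigma

theorem hom_eq_sum {γ α : Type} [Finite γ] [Finite α] (c : γ → γ) (f : α → α)
    [Fintype (CompatSetoid γ c)] :
    homC c f = ∑ s : CompatSetoid γ c, Nat.card (injFam c f s) := by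
  rw [homC, ← nat_card_sigma]
  exact (Nat.card_congr (Equiv.ofBijective _ (toHom_bijective c f))).symm

end MIC

namespace MIC

def botS (γ : Type) : Setoid γ := ⟨Eq, ⟨fun _ => rfl, Eq.symm, Eq.trans⟩⟩

def botCS (γ : Type) (c : γ → γ) : CompatSetoid γ c :=
  ⟨botS γ, fun a b h => congrArg c h⟩

theorem iso_bot {γ : Type} (c : γ → γ) : FddsIso c (quotMap c (botCS γ c)) := by
  have hbij : Function.Bijective (Quotient.mk (botS γ)) := by
    constructor
    · intro a b h
      exact Quotient.exact h
    · exact Quotient.mk_surjective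
  exact ⟨Equiv.ofBijective _ hbij, rfl⟩

theorem injC_bot {γ α : Type} (c : γ → γ) (f : α → α) :
    Nat.card (injFam c f (botCS γ c)) = injC c f :=
  (injC_source_iso f (iso_bot c)).symm

theorem card_quot_lt {γ : Type} [Fintype γ] (c : γ → γ) (s : CompatSetoid γ c)
    (hs : s ≠ botCS γ c) : Nat.card (Quotient s.1) < Nat.card γ := by
  have hne : ∃ a b : γ, a ≠ b ∧ s.1.r a b := by
    by_contra hcon
    push_neg at hcon
    apply hs
    apply Subtype.ext
    apply Setoid.ext
    intro a b
    constructor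
    · intro hab
      by_contra hne
      exact hne (hcon a b hne hab).elim
    · intro hab
      exact hab ▸ s.1.refl a
  obtain ⟨a, b, hab, hrel⟩ := hne
  letI : Fintype (Quotient s.1) := Fintype.ofFinite _
  rw [Nat.card_eq_fintype_card, Nat.card_eq_fintype_card]
  refine Fintype.card_lt_of_surjective_not_injective _ Quotient.mk_surjective ?_
  intro hinj
  exact hab (hinj (Quotient.sound hrel))

end MIC

namespace MIC

theorem inj_eq_of_hom_eq {α β : Type} [Finite α] [Finite β] {f : α → α} {g : β → β}
    (H : ∀ (γ : Type) [Fintype γ] (c : γ → γ), homC c f = homC c g) :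
    ∀ (n : ℕ) (γ : Type) [Fintype γ] (c : γ → γ), Nat.card γ ≤ n → injC c f = injC c g := by
  intro n
  induction n using Nat.strong_induction_on with
  | _ n ih =>
    intro γ _ c hcard
    classical
    letI : Fintype (CompatSetoid γ c) := Fintype.ofFinite _
    have hf := hom_eq_sum c f
    have hg := hom_eq_sum c g
    rw [← Finset.add_sum_erase _ _ (Finset.mem_univ (botCS γ c))] at hf hg
    have htail : ∑ s ∈ Finset.univ.erase (botCS γ c), Nat.card (injFam c f s)
        = ∑ s ∈ Finset.univ.erase (botCS γ c), Nat.card (injFam c g s) := by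
      apply Finset.sum_congr rfl
      intro s hsmem
      have hs : s ≠ botCS γ c := Finset.ne_of_mem_erase hsmem
      have hlt : Nat.card (Quotient s.1) < Nat.card γ := card_quot_lt c s hs
      letI : Fintype (Quotient s.1) := Fintype.ofFinite _
      have hres := ih (Nat.card (Quotient s.1)) (lt_of_lt_of_le hlt hcard)
        (Quotient s.1) (quotMap c s) le_rfl
      exact hres
    rw [injC_bot] at hf hg
    have hH := H γ c
    rw [hf, hg, htail] at hH
    exact Nat.add_right_cancel hH

theorem lovasz {α β : Type} [Fintype α] [Fintype β] (f : α → α) (g : β → β)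
    (H : ∀ (γ : Type) [Fintype γ] (c : γ → γ), homC c f = homC c g) : FddsIso f g := by
  have key : ∀ (γ : Type) [Fintype γ] (c : γ → γ), injC c f = injC c g := by
    intro γ _ c
    exact inj_eq_of_hom_eq H (Nat.card γ) γ c le_rfl
  -- injection α → β
  have h1 : 0 < injC f f := by
    rw [injC]
    have : Nonempty {h : α → α // IsHom f f h ∧ Function.Injective h} :=
      ⟨⟨id, fun z => rfl, fun a b h => h⟩⟩
    exact Nat.card_pos
  have h2 : 0 < injC g g := by
    rw [injC]
    have : Nonempty {h : β → β // IsHom g g h ∧ Function.Injective h} :=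
      ⟨⟨id, fun z => rfl, fun a b h => h⟩⟩
    exact Nat.card_pos
  rw [key α f] at h1
  rw [← key β g] at h2
  obtain ⟨h, hhom, hinj⟩ := (Nat.card_pos_iff.mp h1).1.some
  obtain ⟨h', _, hinj'⟩ := (Nat.card_pos_iff.mp h2).1.some
  have hcard : Fintype.card α = Fintype.card β :=
    le_antisymm (Fintype.card_le_of_injective h hinj) (Fintype.card_le_of_injective h' hinj')
  have hbij : Function.Bijective h :=
    (Fintype.bijective_iff_injective_and_card h).mpr ⟨hinj, hcard⟩
  exact ⟨Equiv.ofBijective h hbij, funext fun z => hhom z⟩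

end MIC

/-- For `k ≥ 1`, the monomial `A X^k` is injective up to isomorphism
iff `A` is cancelable. -/
theorem monomial_injective_iff_cancelable {α : Type} [Fintype α] (a : α → α)
    (k : ℕ) (hk : 1 ≤ k) :
    (∀ (β γ : Type) [Fintype β] [Fintype γ] (x : β → β) (y : γ → γ),
      FddsIso (Prod.map a (powMap x k)) (Prod.map a (powMap y k)) → FddsIso x y)
    ↔ Cancelable a := by
  constructor
  · intro Hm β γ _ _ g h Hprod
    exact Hm β γ g h (MIC.prod_pow_congr a g h Hprod k)
  · intro Hc β γ _ _ x y Hpk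
    have hpow : FddsIso (powMap x k) (powMap y k) :=
      Hc (Fin k → β) (Fin k → γ) (powMap x k) (powMap y k) Hpk
    apply MIC.lovasz
    intro δ _ c
    have h1 : MIC.homC c (powMap x k) = MIC.homC c (powMap y k) :=
      MIC.homC_target_iso c hpow
    rw [MIC.homC_pow, MIC.homC_pow] at h1
    exact Nat.pow_left_injective (by omega) h1
end

section
/- Let A be an FDDS whose transition function has no fixed point, and let k ≥ 1 be an integer. Then the monomial A X^k is not injective up to isomorphism: there exist FDDS X and Y with X not isomorphic to Y but A × X^k ≅ A × Y^k. -/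
namespace FddsIso

theorem refl {α : Type} (f : α → α) : FddsIso f f := ⟨Equiv.refl α, rfl⟩

theorem symm {α β : Type} {f : α → α} {g : β → β} (h : FddsIso f g) : FddsIso g f := by
  obtain ⟨e, he⟩ := h
  refine ⟨e.symm, funext fun y => ?_⟩
  have := congrFun he (e.symm y)
  simp only [Function.comp_apply] at this ⊢
  rw [Equiv.apply_symm_apply] at this
  rw [← this, Equiv.symm_apply_apply]

theorem trans {α β γ : Type} {f : α → α} {g : β → β} {h : γ → γ}
    (h1 : FddsIso f g) (h2 : FddsIso g h) : FddsIso f h := by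
  obtain ⟨e1, he1⟩ := h1
  obtain ⟨e2, he2⟩ := h2
  refine ⟨e1.trans e2, funext fun x => ?_⟩
  simp only [Function.comp_apply, Equiv.trans_apply]
  have h1 := congrFun he1 x
  have h2 := congrFun he2 (e1 x)
  simp only [Function.comp_apply] at h1 h2
  rw [h1]; exact h2

theorem prodCongr {α β γ δ : Type} {f : α → α} {g : β → β} {f' : γ → γ} {g' : δ → δ}
    (h1 : FddsIso f f') (h2 : FddsIso g g') :
    FddsIso (Prod.map f g) (Prod.map f' g') := by
  obtain ⟨e1, he1⟩ := h1
  obtain ⟨e2, he2⟩ := h2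
  refine ⟨Equiv.prodCongr e1 e2, funext fun p => ?_⟩
  simp only [Function.comp_apply, Equiv.prodCongr_apply, Prod.map]
  exact Prod.ext (congrFun he1 p.1) (congrFun he2 p.2)

theorem sumCongr {α β γ δ : Type} {f : α → α} {g : β → β} {f' : γ → γ} {g' : δ → δ}
    (h1 : FddsIso f f') (h2 : FddsIso g g') :
    FddsIso (Sum.map f g) (Sum.map f' g') := by
  obtain ⟨e1, he1⟩ := h1
  obtain ⟨e2, he2⟩ := h2
  refine ⟨Equiv.sumCongr e1 e2, funext fun p => ?_⟩
  rcases p with x | y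
  · simpa using congrFun he1 x
  · simpa using congrFun he2 y

theorem prodComm {α β : Type} (f : α → α) (g : β → β) :
    FddsIso (Prod.map f g) (Prod.map g f) :=
  ⟨Equiv.prodComm α β, rfl⟩

theorem prodAssoc {α β γ : Type} (f : α → α) (g : β → β) (h : γ → γ) :
    FddsIso (Prod.map (Prod.map f g) h) (Prod.map f (Prod.map g h)) :=
  ⟨Equiv.prodAssoc α β γ, rfl⟩

theorem sumComm {α β : Type} (f : α → α) (g : β → β) :
    FddsIso (Sum.map f g) (Sum.map g f) := by
  refine ⟨Equiv.sumComm α β, funext fun p => ?_⟩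
  rcases p with x | y <;> rfl

theorem prodSumDistrib {α β γ : Type} (f : α → α) (g : β → β) (h : γ → γ) :
    FddsIso (Prod.map f (Sum.map g h)) (Sum.map (Prod.map f g) (Prod.map f h)) := by
  refine ⟨Equiv.prodSumDistrib α β γ, funext fun p => ?_⟩
  rcases p with ⟨x, y | z⟩ <;> rfl

theorem ofIsEmpty {α β : Type} [IsEmpty α] [IsEmpty β] (f : α → α) (g : β → β) :
    FddsIso f g :=
  ⟨Equiv.equivOfIsEmpty α β, funext fun x => isEmptyElim x⟩

end FddsIso

/-- Map on a sigma type acting fiberwise. -/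
def sigMap {I : Type} {δ : I → Type} (F : ∀ i, δ i → δ i) (q : Σ i, δ i) : Σ i, δ i :=
  ⟨q.1, F q.1 q.2⟩

namespace FddsIso

theorem sigmaCongr {I : Type} {δ δ' : I → Type} {F : ∀ i, δ i → δ i} {G : ∀ i, δ' i → δ' i}
    (h : ∀ i, FddsIso (F i) (G i)) : FddsIso (sigMap F) (sigMap G) := by
  choose e he using h
  refine ⟨Equiv.sigmaCongrRight e, funext fun q => ?_⟩
  rcases q with ⟨i, x⟩
  simp only [Function.comp_apply, sigMap, Equiv.sigmaCongrRight_apply]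
  exact Sigma.ext rfl (heq_of_eq (congrFun (he i) x))

theorem prodSigmaDistrib {I : Type} {δ : I → Type} {β : Type}
    (F : ∀ i, δ i → δ i) (g : β → β) :
    FddsIso (Prod.map (sigMap F) g) (sigMap (fun i => Prod.map (F i) g)) := by
  refine ⟨Equiv.sigmaProdDistrib δ β, funext fun p => ?_⟩
  rcases p with ⟨⟨i, x⟩, v⟩
  rfl

end FddsIso

/-- The restriction of `a` to the fibers of an invariant `ℕ`-valued function. -/
def fiberMap {α : Type} (a : α → α) (ι : α → ℕ) (hι : ∀ x, ι (a x) = ι x) (i : ℕ)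
    (q : {x // ι x = i}) : {x // ι x = i} :=
  ⟨a q.1, by rw [hι, q.2]⟩

theorem fddsIso_fiber {α : Type} (a : α → α) (ι : α → ℕ) (hι : ∀ x, ι (a x) = ι x) :
    FddsIso a (sigMap (fiberMap a ι hι)) := by
  refine ⟨(Equiv.sigmaFiberEquiv ι).symm, funext fun x => ?_⟩
  simp only [Function.comp_apply]
  have h1 : ∀ y : α, (Equiv.sigmaFiberEquiv ι).symm y = ⟨ι y, ⟨y, rfl⟩⟩ := fun y => rfl
  rw [h1, h1]
  refine Sigma.ext (hι x) ?_
  exact (Subtype.heq_iff_coe_eq (fun y =>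
    ⟨fun hy => hy.trans (hι x), fun hy => hy.trans (hι x).symm⟩)).2 rfl

/-- Decomposition principle: to compare `A × B` and `A × C` it suffices to compare
fiberwise over an invariant function. -/
theorem fddsIso_of_fibers {α β γ : Type} (a : α → α) (g : β → β) (h : γ → γ)
    (ι : α → ℕ) (hι : ∀ x, ι (a x) = ι x)
    (hfib : ∀ i, FddsIso (Prod.map (fiberMap a ι hι i) g) (Prod.map (fiberMap a ι hι i) h)) :
    FddsIso (Prod.map a g) (Prod.map a h) := by
  have base := fddsIso_fiber a ι hι
  refine ((FddsIso.prodCongr base (FddsIso.refl g)).trans ?_).trans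
    ((FddsIso.prodCongr base (FddsIso.refl h)).symm)
  refine (FddsIso.prodSigmaDistrib _ g).trans ?_
  refine (FddsIso.sigmaCongr hfib).trans ?_
  exact (FddsIso.prodSigmaDistrib _ h).symm

theorem fddsIso_pow_zero {β γ : Type} (g : β → β) (h : γ → γ) :
    FddsIso (powMap g 0) (powMap h 0) := by
  refine ⟨⟨fun _ _ => Fin.elim0 (by assumption), fun _ _ => Fin.elim0 (by assumption),
    fun v => funext fun i => Fin.elim0 i, fun v => funext fun i => Fin.elim0 i⟩,
    funext fun v => funext fun i => Fin.elim0 i⟩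

theorem fddsIso_pow_succ {β : Type} (g : β → β) (k : ℕ) :
    FddsIso (powMap g (k + 1)) (Prod.map g (powMap g k)) := by
  refine ⟨(Fin.consEquiv (fun _ : Fin (k + 1) => β)).symm, funext fun v => ?_⟩
  rfl

/-- The key bootstrapping: from `A × B ≅ A × C` deduce `A × B^k ≅ A × C^k`. -/
theorem fddsIso_pow {α β γ : Type} {a : α → α} {g : β → β} {h : γ → γ}
    (hbc : FddsIso (Prod.map a g) (Prod.map a h)) (k : ℕ) :
    FddsIso (Prod.map a (powMap g k)) (Prod.map a (powMap h k)) := by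
  induction k with
  | zero => exact FddsIso.prodCongr (FddsIso.refl a) (fddsIso_pow_zero g h)
  | succ k ih =>
    refine (FddsIso.prodCongr (FddsIso.refl a) (fddsIso_pow_succ g k)).trans ?_
    refine FddsIso.trans ?_ (FddsIso.prodCongr (FddsIso.refl a) (fddsIso_pow_succ h k)).symm
    -- A × (g × g^k) ≅ (A × g^k) × g ≅ (A × h^k) × g ≅ (A × g) × h^k ≅ (A × h) × h^k ≅ A × (h × h^k)
    refine FddsIso.trans (FddsIso.prodAssoc a g (powMap g k)).symm ?_
    refine FddsIso.trans ?_ (FddsIso.prodAssoc a h (powMap h k))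
    -- (A × g) × g^k ≅ (A × h) × h^k
    refine FddsIso.trans (FddsIso.prodCongr hbc (FddsIso.refl (powMap g k))) ?_
    -- (A × h) × g^k ≅ (A × h) × h^k : need A×g^k ≅ A×h^k from ih, but the left factor is A×h.
    -- rearrange: (A×h) × g^k ≅ (g^k × A) × h? simpler: ((A×h) × g^k) ≅ (h × (A × g^k))
    refine FddsIso.trans (FddsIso.prodCongr (FddsIso.prodComm a h) (FddsIso.refl _)) ?_
    refine FddsIso.trans (FddsIso.prodAssoc h a (powMap g k)) ?_
    refine FddsIso.trans (FddsIso.prodCongr (FddsIso.refl h) ih) ?_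
    refine FddsIso.trans (FddsIso.prodAssoc h a (powMap h k)).symm ?_
    exact FddsIso.prodCongr (FddsIso.prodComm h a) (FddsIso.refl _)

/-! ### Eventual period theory -/

/-- The set of eventual periods of `x` under `a`. -/
def ePeriods {α : Type} (a : α → α) (x : α) : Set ℕ :=
  {l | 0 < l ∧ ∃ m, a^[m + l] x = a^[m] x}

/-- The minimal eventual period. -/
noncomputable def eper {α : Type} (a : α → α) (x : α) : ℕ :=
  sInf (ePeriods a x)

theorem ePeriods_nonempty {α : Type} [Finite α] (a : α → α) (x : α) :
    (ePeriods a x).Nonempty := by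
  obtain ⟨i, j, hij, hfij⟩ := Finite.exists_ne_map_eq_of_infinite (fun m : ℕ => a^[m] x)
  rcases Nat.lt_or_ge i j with hlt | hge
  · exact ⟨j - i, by omega, i, by rw [Nat.add_sub_cancel' hlt.le]; exact hfij.symm⟩
  · have hlt : j < i := by omega
    exact ⟨i - j, by omega, j, by rw [Nat.add_sub_cancel' hlt.le]; exact hfij⟩

theorem eper_mem {α : Type} [Finite α] (a : α → α) (x : α) :
    eper a x ∈ ePeriods a x := Nat.sInf_mem (ePeriods_nonempty a x)

theorem eper_pos {α : Type} [Finite α] (a : α → α) (x : α) : 0 < eper a x :=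
  (eper_mem a x).1

theorem ePeriods_apply {α : Type} (a : α → α) (x : α) :
    ePeriods a (a x) = ePeriods a x := by
  ext l
  simp only [ePeriods, Set.mem_setOf_eq, and_congr_right_iff]
  intro _
  constructor
  · rintro ⟨m, hm⟩
    refine ⟨m + 1, ?_⟩
    have h1 : ∀ s : ℕ, a^[s] (a x) = a^[s + 1] x := fun s => by
      rw [Function.iterate_succ_apply]
    rw [h1, h1] at hm
    have he : m + l + 1 = m + 1 + l := by omega
    rwa [he] at hm
  · rintro ⟨m, hm⟩
    refine ⟨m, ?_⟩
    have h1 : ∀ s : ℕ, a^[s] (a x) = a (a^[s] x) := fun s => by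
      rw [← Function.iterate_succ_apply, Function.iterate_succ_apply']
    rw [h1, h1, hm]

theorem eper_apply {α : Type} (a : α → α) (x : α) : eper a (a x) = eper a x := by
  unfold eper; rw [ePeriods_apply]

/-- A period established at `m` persists at all later times. -/
theorem period_ge {α : Type} (a : α → α) (x : α) (l m : ℕ)
    (hm : a^[m + l] x = a^[m] x) (m' : ℕ) (hm' : m ≤ m') : a^[m' + l] x = a^[m'] x := by
  obtain ⟨e, rfl⟩ := Nat.exists_eq_add_of_le hm'
  induction e with
  | zero => simpa using hm
  | succ e ih =>
    have h1 : m + (e + 1) + l = (m + e + l) + 1 := by omega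
    have h2 : m + (e + 1) = (m + e) + 1 := by omega
    rw [h1, h2, Function.iterate_succ_apply', Function.iterate_succ_apply', ih (by omega)]

/-- Iterating a period. -/
theorem period_mul {α : Type} (a : α → α) (x : α) (l m : ℕ)
    (hm : ∀ m', m ≤ m' → a^[m' + l] x = a^[m'] x) (q : ℕ) : a^[m + q * l] x = a^[m] x := by
  induction q with
  | zero => simp
  | succ q ih =>
    have h1 : m + (q + 1) * l = (m + q * l) + l := by ring
    rw [h1, hm (m + q * l) (by omega), ih]

/-- The minimal eventual period divides every eventual period. -/
theorem eper_dvd {α : Type} [Finite α] (a : α → α) (x : α) (c : ℕ) (hc : c ∈ ePeriods a x) :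
    eper a x ∣ c := by
  obtain ⟨hcpos, m1, hm1⟩ := hc
  obtain ⟨hlpos, m0, hm0⟩ := eper_mem a x
  set l := eper a x with hl
  set M := max m0 m1 with hM
  have hPl : ∀ m', M ≤ m' → a^[m' + l] x = a^[m'] x := fun m' h =>
    period_ge a x l m0 hm0 m' (le_trans (le_max_left _ _) h)
  have hPc : a^[M + c] x = a^[M] x := period_ge a x c m1 hm1 M (le_max_right _ _)
  obtain ⟨q, s, hs, hc⟩ : ∃ q s, s < l ∧ c = q * l + s :=
    ⟨c / l, c % l, Nat.mod_lt _ hlpos, by rw [Nat.mul_comm]; exact (Nat.div_add_mod c l).symm⟩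
  have h2 : a^[(M + s) + q * l] x = a^[M + s] x :=
    period_mul a x l (M + s) (fun m' h => hPl m' (by omega)) q
  have h3 : a^[M + s] x = a^[M] x := by
    have he : M + c = (M + s) + q * l := by omega
    rw [he] at hPc
    rw [← h2, hPc]
  rcases Nat.eq_zero_or_pos s with rfl | hspos
  · exact ⟨q, by rw [hc]; ring⟩
  · exfalso
    have hmem : s ∈ ePeriods a x := ⟨hspos, M, h3⟩
    have h5 : l ≤ s := Nat.sInf_le hmem
    omega

/-- If two iterates of `x` coincide, the exponents agree modulo any divisor of `eper`. -/
theorem iterate_eq_mod {α : Type} [Finite α] (a : α → α) (x : α) (s t : ℕ)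
    (hst : a^[s] x = a^[t] x) (p : ℕ) (hp : p ∣ eper a x) :
    (s : ZMod p) = (t : ZMod p) := by
  rcases Nat.lt_trichotomy s t with h | rfl | h
  · have hd : eper a x ∣ t - s := by
      refine eper_dvd a x (t - s) ⟨by omega, s, ?_⟩
      rw [Nat.add_sub_cancel' h.le]; exact hst.symm
    exact (ZMod.natCast_eq_natCast_iff s t p).2
      ((Nat.modEq_iff_dvd' h.le).2 (dvd_trans hp hd))
  · rfl
  · have hd : eper a x ∣ s - t := by
      refine eper_dvd a x (s - t) ⟨by omega, t, ?_⟩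
      rw [Nat.add_sub_cancel' h.le]; exact hst
    exact ((ZMod.natCast_eq_natCast_iff t s p).2
      ((Nat.modEq_iff_dvd' h.le).2 (dvd_trans hp hd))).symm

/-- **Phase function**: if `p` divides the eventual period of every state, there is an
equivariant phase `φ : δ → ZMod p`. -/
theorem exists_phase {δ : Type} [Finite δ] (d : δ → δ) (p : ℕ)
    (h : ∀ x, p ∣ eper d x) :
    ∃ φ : δ → ZMod p, ∀ x, φ (d x) = φ x + 1 := by
  rcases isEmpty_or_nonempty δ with hE | hNE
  · exact ⟨fun _ => 0, fun x => isEmptyElim x⟩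
  classical
  haveI : Fintype δ := Fintype.ofFinite δ
  letI : LinearOrder δ := LinearOrder.lift' (Fintype.equivFin δ) (Fintype.equivFin δ).injective
  set R : δ → δ → Prop := fun x y => ∃ m k, d^[m] x = d^[k] y with hR
  set comp : δ → Finset δ := fun x => Finset.univ.filter (R x) with hcomp
  have hxcomp : ∀ x, x ∈ comp x := fun x => by
    simp only [hcomp, Finset.mem_filter, Finset.mem_univ, true_and]
    exact ⟨0, 0, rfl⟩
  have hcompd : ∀ x, comp (d x) = comp x := by
    intro x
    ext y
    simp only [hcomp, Finset.mem_filter, Finset.mem_univ, true_and, hR]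
    constructor
    · rintro ⟨m, k, hmk⟩
      exact ⟨m + 1, k, by rw [Function.iterate_succ_apply]; exact hmk⟩
    · rintro ⟨m, k, hmk⟩
      refine ⟨m, k + 1, ?_⟩
      rw [← Function.iterate_succ_apply d m x, Function.iterate_succ_apply' d m x,
        Function.iterate_succ_apply' d k y, hmk]
  set root : δ → δ := fun x => (comp x).min' ⟨x, hxcomp x⟩ with hroot
  have hmin' : ∀ (s t : Finset δ) (hs : s.Nonempty) (ht : t.Nonempty), s = t →
      s.min' hs = t.min' ht := by rintro s t hs ht rfl; rfl
  have hrootd : ∀ x, root (d x) = root x := fun x =>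
    hmin' _ _ _ _ (hcompd x)
  have spec : ∀ x, ∃ m k, d^[m] x = d^[k] (root x) := by
    intro x
    have := Finset.min'_mem (comp x) ⟨x, hxcomp x⟩
    simpa only [hcomp, Finset.mem_filter, Finset.mem_univ, true_and, hR] using this
  choose m k hmk using spec
  -- well-definedness of the phase
  have wd : ∀ x (m1 k1 m2 k2 : ℕ), d^[m1] x = d^[k1] (root x) → d^[m2] x = d^[k2] (root x) →
      (k1 : ZMod p) - m1 = (k2 : ZMod p) - m2 := by
    intro x m1 k1 m2 k2 h1 h2
    have e1 : d^[m2 + k1] (root x) = d^[m2 + m1] x := by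
      rw [Function.iterate_add_apply, ← h1, ← Function.iterate_add_apply]
    have e2 : d^[m1 + k2] (root x) = d^[m1 + m2] x := by
      rw [Function.iterate_add_apply, ← h2, ← Function.iterate_add_apply]
    have e3 : d^[m2 + k1] (root x) = d^[m1 + k2] (root x) := by
      rw [e1, e2, Nat.add_comm m2 m1]
    have e4 := iterate_eq_mod d (root x) (m2 + k1) (m1 + k2) e3 p (h (root x))
    push_cast at e4
    linear_combination e4
  refine ⟨fun x => (k x : ZMod p) - m x, fun x => ?_⟩
  have hw : d^[m x] (d x) = d^[k x + 1] (root (d x)) := by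
    rw [hrootd, ← Function.iterate_succ_apply d (m x) x, Function.iterate_succ_apply' d (m x) x,
      Function.iterate_succ_apply' d (k x) (root x), hmk x]
  have hwd := wd (d x) (m (d x)) (k (d x)) (m x) (k x + 1) (hmk (d x)) hw
  show (k (d x) : ZMod p) - m (d x) = ((k x : ZMod p) - m x) + 1
  rw [hwd]
  push_cast
  ring

/-! ### The gadget pair of FDDS -/

/-- Bundled dynamical system. -/
def Fdds : Type 1 := Σ β : Type, β → β

/-- One step of the gadget construction. -/
def gstep (p : ℕ) (X Y : Fdds) : Fdds :=
  ⟨(ZMod p × X.1) ⊕ (ZMod p × Y.1),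
    Sum.map (Prod.map (· + 1) X.2) (Prod.map id Y.2)⟩

/-- The positive and negative parts of `∏_{j<r} (C_{j+2} - (j+2)·1)`. -/
def BC : ℕ → Fdds × Fdds
  | 0 => (⟨PUnit, id⟩, ⟨PEmpty, id⟩)
  | r + 1 => (gstep (r + 2) (BC r).1 (BC r).2, gstep (r + 2) (BC r).2 (BC r).1)

theorem BC_succ (r : ℕ) :
    BC (r + 1) = (gstep (r + 2) (BC r).1 (BC r).2, gstep (r + 2) (BC r).2 (BC r).1) := rfl

def bcFintype : ∀ r, Fintype (BC r).1.1 × Fintype (BC r).2.1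
  | 0 => (inferInstanceAs (Fintype PUnit), inferInstanceAs (Fintype PEmpty))
  | r + 1 =>
    letI i1 := (bcFintype r).1
    letI i2 := (bcFintype r).2
    (inferInstanceAs (Fintype ((ZMod (r + 2) × (BC r).1.1) ⊕ (ZMod (r + 2) × (BC r).2.1))),
     inferInstanceAs (Fintype ((ZMod (r + 2) × (BC r).2.1) ⊕ (ZMod (r + 2) × (BC r).1.1))))

/-- Existence of a fixed point. -/
def HasFix {β : Type} (f : β → β) : Prop := ∃ x, f x = x

theorem hasFix_of_iso {β γ : Type} {f : β → β} {g : γ → γ} (h : FddsIso f g)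
    (hf : HasFix f) : HasFix g := by
  obtain ⟨e, he⟩ := h
  obtain ⟨x, hx⟩ := hf
  refine ⟨e x, ?_⟩
  have := congrFun he x
  simp only [Function.comp_apply] at this
  rw [← this, hx]

theorem hasFix_gstep (p : ℕ) (hp : 2 ≤ p) (X Y : Fdds) :
    HasFix (gstep p X Y).2 ↔ HasFix Y.2 := by
  haveI : NeZero p := ⟨by omega⟩
  haveI : Fact (1 < p) := ⟨by omega⟩
  constructor
  · rintro ⟨(⟨z, x⟩ | ⟨z, y⟩), hz⟩
    · exfalso
      simp only [gstep, Sum.map_inl, Sum.inl.injEq, Prod.map, Prod.mk.injEq] at hz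
      have h1 : z + 1 = z := hz.1
      have : (1 : ZMod p) = 0 := by
        have := congrArg (· - z) h1
        simpa [add_comm, add_sub_cancel_right] using this
      exact one_ne_zero this
    · simp only [gstep, Sum.map_inr, Sum.inr.injEq, Prod.map, Prod.mk.injEq, id_eq] at hz
      exact ⟨y, hz.2⟩
  · rintro ⟨y, hy⟩
    exact ⟨Sum.inr (0, y), by simp [gstep, Prod.map, hy]⟩

theorem bc_fix : ∀ r, (HasFix (BC r).1.2 ↔ Even r) ∧ (HasFix (BC r).2.2 ↔ Odd r) := by
  intro r
  induction r with
  | zero =>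
    constructor
    · simp only [BC]
      exact ⟨fun _ => Even.zero, fun _ => ⟨PUnit.unit, rfl⟩⟩
    · simp only [BC]
      exact ⟨fun ⟨x, _⟩ => isEmptyElim x, fun h => by simp at h⟩
  | succ r ih =>
    rw [BC_succ]
    constructor
    · rw [hasFix_gstep (r + 2) (by omega), ih.2, Nat.even_add_one, Nat.not_even_iff_odd]
    · rw [hasFix_gstep (r + 2) (by omega), ih.1, Nat.odd_add_one, Nat.not_odd_iff_even]

theorem bc_not_iso (r : ℕ) : ¬ FddsIso (BC r).1.2 (BC r).2.2 := by
  intro h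
  rcases Nat.even_or_odd r with he | ho
  · have h1 : HasFix (BC r).1.2 := (bc_fix r).1.2 he
    have h2 : Odd r := (bc_fix r).2.1 (hasFix_of_iso h h1)
    rw [← Nat.not_even_iff_odd] at h2
    exact h2 he
  · have h1 : HasFix (BC r).2.2 := (bc_fix r).2.2 ho
    have h2 : Even r := (bc_fix r).1.1 (hasFix_of_iso h.symm h1)
    rw [← Nat.not_odd_iff_even] at h2
    exact h2 ho

/-- The phase-shift isomorphism: if `δ` carries an equivariant phase with values in
`ZMod p`, then `δ × (C_p × X)` is isomorphic to `δ × (p·X)`. -/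
theorem phase_shift {δ X : Type} (d : δ → δ) (p : ℕ) (φ : δ → ZMod p)
    (hφ : ∀ x, φ (d x) = φ x + 1) (g : X → X) :
    FddsIso (Prod.map d (Prod.map (· + 1 : ZMod p → ZMod p) g))
            (Prod.map d (Prod.map (id : ZMod p → ZMod p) g)) := by
  refine ⟨⟨fun q => (q.1, (q.2.1 - φ q.1, q.2.2)), fun q => (q.1, (q.2.1 + φ q.1, q.2.2)),
    fun q => by simp, fun q => by simp⟩, ?_⟩
  funext q
  obtain ⟨x, z, w⟩ := q
  simp only [Function.comp_apply, Prod.map, Equiv.coe_fn_mk, id_eq, hφ]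
  refine Prod.ext rfl (Prod.ext ?_ rfl)
  simp only
  ring

/-- Main lemma: the gadget pair is annihilated by any system whose phases are all
divisible by one of the `j+2`, `j < r`. -/
theorem gadget_iso : ∀ (r : ℕ) {δ : Type} (d : δ → δ) (j : ℕ), j < r →
    ∀ (φ : δ → ZMod (j + 2)), (∀ x, φ (d x) = φ x + 1) →
    FddsIso (Prod.map d (BC r).1.2) (Prod.map d (BC r).2.2) := by
  intro r
  induction r with
  | zero => intro δ d j hj; omega
  | succ s ih =>
    intro δ d j hj φ hφ
    rcases Nat.lt_succ_iff_lt_or_eq.1 hj with hjs | rfl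
    · -- j < s : use the induction hypothesis on both summands
      show FddsIso
        (Prod.map d (Sum.map (Prod.map (· + 1) (BC s).1.2) (Prod.map id (BC s).2.2)))
        (Prod.map d (Sum.map (Prod.map (· + 1) (BC s).2.2) (Prod.map id (BC s).1.2)))
      refine (FddsIso.prodSumDistrib _ _ _).trans (FddsIso.trans ?_
        (FddsIso.prodSumDistrib _ _ _).symm)
      refine FddsIso.sumCongr ?_ ?_
      · -- δ × (C_p × B) ≅ δ × (C_p × C)
        refine (FddsIso.prodAssoc d (· + 1) (BC s).1.2).symm.trans
          (FddsIso.trans ?_ (FddsIso.prodAssoc d (· + 1) (BC s).2.2))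
        exact ih (Prod.map d (· + 1)) j hjs (fun q => φ q.1) (fun q => hφ q.1)
      · -- δ × (p·C) ≅ δ × (p·B)
        refine (FddsIso.prodAssoc d id (BC s).2.2).symm.trans
          (FddsIso.trans ?_ (FddsIso.prodAssoc d id (BC s).1.2))
        exact (ih (Prod.map d id) j hjs (fun q => φ q.1) (fun q => hφ q.1)).symm
    · -- j = s : the phase-shift swap
      show FddsIso
        (Prod.map d (Sum.map (Prod.map (· + 1) (BC j).1.2) (Prod.map id (BC j).2.2)))
        (Prod.map d (Sum.map (Prod.map (· + 1) (BC j).2.2) (Prod.map id (BC j).1.2)))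
      refine (FddsIso.prodSumDistrib _ _ _).trans (FddsIso.trans ?_
        (FddsIso.prodSumDistrib _ _ _).symm)
      refine FddsIso.trans (FddsIso.sumCongr (phase_shift d (j + 2) φ hφ (BC j).1.2)
        (FddsIso.refl _)) ?_
      refine FddsIso.trans (FddsIso.sumComm _ _) ?_
      exact FddsIso.sumCongr ((phase_shift d (j + 2) φ hφ (BC j).2.2).symm) (FddsIso.refl _)

/-! ### Bounds on the eventual period, and transfer to fibers -/

theorem eper_ge_two {α : Type} [Finite α] (a : α → α) (hfix : ∀ x : α, a x ≠ x) (x : α) :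
    2 ≤ eper a x := by
  have hpos := eper_pos a x
  rcases Nat.lt_or_ge (eper a x) 2 with h | h
  · exfalso
    have h1 : eper a x = 1 := by omega
    obtain ⟨_, m, hm⟩ := eper_mem a x
    rw [h1, Function.iterate_succ_apply'] at hm
    exact hfix (a^[m] x) hm
  · exact h

theorem eper_le_card {α : Type} [Fintype α] (a : α → α) (x : α) :
    eper a x ≤ Fintype.card α := by
  obtain ⟨hpos, m, hm⟩ := eper_mem a x
  have hinj : Function.Injective (fun t : Fin (eper a x) => a^[m + t.1] x) := by
    intro t t' het
    simp only at het
    by_contra hne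
    have key : ∀ u u' : Fin (eper a x), u.1 < u'.1 → a^[m + u.1] x = a^[m + u'.1] x → False := by
      intro u u' hlt heq
      have hmem : (u'.1 - u.1) ∈ ePeriods a x := by
        refine ⟨by omega, m + u.1, ?_⟩
        have he : m + u.1 + (u'.1 - u.1) = m + u'.1 := by omega
        rw [he]; exact heq.symm
      have := Nat.sInf_le hmem
      have hu' := u'.2
      have heq : eper a x = sInf (ePeriods a x) := rfl
      omega
    rcases Nat.lt_trichotomy t.1 t'.1 with h | h | h
    · exact key t t' h het
    · exact hne (Fin.ext h)
    · exact key t' t h het.symm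
  calc eper a x = Fintype.card (Fin (eper a x)) := (Fintype.card_fin _).symm
    _ ≤ Fintype.card α := Fintype.card_le_of_injective _ hinj

theorem fiberMap_iterate {α : Type} (a : α → α) (ι : α → ℕ) (hι : ∀ x, ι (a x) = ι x)
    (i : ℕ) (m : ℕ) (q : {x // ι x = i}) :
    ((fiberMap a ι hι i)^[m] q).1 = a^[m] q.1 := by
  induction m with
  | zero => rfl
  | succ m ih =>
    rw [Function.iterate_succ_apply', Function.iterate_succ_apply']
    show a ((fiberMap a ι hι i)^[m] q).1 = a (a^[m] q.1)
    rw [ih]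

theorem eper_fiberMap {α : Type} (a : α → α) (ι : α → ℕ) (hι : ∀ x, ι (a x) = ι x)
    (i : ℕ) (q : {x // ι x = i}) :
    eper (fiberMap a ι hι i) q = eper a q.1 := by
  unfold eper
  congr 1
  ext l
  simp only [ePeriods, Set.mem_setOf_eq, and_congr_right_iff]
  intro _
  constructor
  · rintro ⟨m, hm⟩
    exact ⟨m, by rw [← fiberMap_iterate a ι hι i, ← fiberMap_iterate a ι hι i, hm]⟩
  · rintro ⟨m, hm⟩
    refine ⟨m, ?_⟩
    apply Subtype.ext
    rw [fiberMap_iterate, fiberMap_iterate]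
    exact hm

/-! ### The main theorem -/

/-- If `A` has no fixed point (i.e. is not cancelable), then for any
`k ≥ 1` the monomial `A X^k` is not injective up to isomorphism. -/
theorem monomial_not_injective_of_no_fixed_point {α : Type} [Fintype α] (a : α → α)
    (hfix : ∀ x : α, a x ≠ x) (k : ℕ) (hk : 1 ≤ k) :
    ∃ (σ τ : Type) (_ : Fintype σ) (_ : Fintype τ) (x : σ → σ) (y : τ → τ),
      ¬ FddsIso x y ∧
      FddsIso (Prod.map a (powMap x k)) (Prod.map a (powMap y k)) := by
  classical
  set n := Fintype.card α with hn
  set r := n + 1 with hr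
  refine ⟨(BC r).1.1, (BC r).2.1, (bcFintype r).1, (bcFintype r).2, (BC r).1.2, (BC r).2.2,
    bc_not_iso r, ?_⟩
  refine fddsIso_pow ?_ k
  set ι : α → ℕ := fun x => eper a x - 2 with hι_def
  have hι : ∀ x, ι (a x) = ι x := fun x => by
    simp only [hι_def, eper_apply]
  refine fddsIso_of_fibers a _ _ ι hι (fun i => ?_)
  rcases isEmpty_or_nonempty {x // ι x = i} with hE | hNE
  · haveI : IsEmpty ({x // ι x = i} × (BC r).1.1) := ⟨fun p => hE.false p.1⟩
    haveI : IsEmpty ({x // ι x = i} × (BC r).2.1) := ⟨fun p => hE.false p.1⟩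
    exact FddsIso.ofIsEmpty _ _
  · obtain ⟨q0⟩ := hNE
    have h2 : ∀ z : α, 2 ≤ eper a z := eper_ge_two a hfix
    have hq0 : eper a q0.1 = i + 2 := by
      have hq := q0.2
      simp only [hι_def] at hq
      have := h2 q0.1
      omega
    have hjr : i < r := by
      have hle := eper_le_card a q0.1
      omega
    have hdvd : ∀ q : {x // ι x = i}, (i + 2) ∣ eper (fiberMap a ι hι i) q := by
      intro q
      rw [eper_fiberMap]
      have hq := q.2
      simp only [hι_def] at hq
      have := h2 q.1
      have : eper a q.1 = i + 2 := by omega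
      rw [this]
    obtain ⟨φ, hφ⟩ := exists_phase (fiberMap a ι hι i) (i + 2) hdvd
    exact gadget_iso r (fiberMap a ι hι i) i hjr φ hφ
end

section
/- Let P = Σ_{i=0}^m A_i X^i be a polynomial over FDDS. Then P is injective up to isomorphism (for all FDDS X, Y, P(X) ≅ P(Y) implies X ≅ Y) if and only if at least one non-constant coefficient A_i with i ≥ 1 is cancelable. -/
namespace FddsAux

open Function


variable {α β γ δ : Type}



/-- Homomorphisms of dynamical systems. -/
def Hm (f : α → α) (g : β → β) : Type :=
  {φ : α → β // ∀ x, φ (f x) = g (φ x)}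

instance (f : α → α) (g : β → β) [Finite α] [Finite β] : Finite (Hm f g) := by
  unfold Hm; infer_instance

/-- hom count -/
noncomputable def hc (f : α → α) (g : β → β) : ℕ := Nat.card (Hm f g)

/-- injective hom type -/
def Ij (f : α → α) (g : β → β) : Type :=
  {φ : Hm f g // Function.Injective φ.1}

instance (f : α → α) (g : β → β) [Finite α] [Finite β] : Finite (Ij f g) := by
  unfold Ij; infer_instance

noncomputable def ic (f : α → α) (g : β → β) : ℕ := Nat.card (Ij f g)

theorem iso_comm {f : α → α} {g : β → β} (e : α ≃ β) (he : ⇑e ∘ f = g ∘ ⇑e) (x : α) :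
    e (f x) = g (e x) := congrFun he x

theorem iso_comm_symm {f : α → α} {g : β → β} (e : α ≃ β) (he : ⇑e ∘ f = g ∘ ⇑e) (y : β) :
    e.symm (g y) = f (e.symm y) := by
  have := iso_comm e he (e.symm y)
  simp only [Equiv.apply_symm_apply] at this
  rw [← this, Equiv.symm_apply_apply]

theorem fddsIso_symm {f : α → α} {g : β → β} (h : FddsIso f g) : FddsIso g f := by
  obtain ⟨e, he⟩ := h
  exact ⟨e.symm, funext fun y => iso_comm_symm e he y⟩

/-- target iso: Hm equivalence -/
def hmCongrTarget {g : β → β} {g' : γ → γ} (e : β ≃ γ)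
    (he : ⇑e ∘ g = g' ∘ ⇑e) (u : δ → δ) : Hm u g ≃ Hm u g' where
  toFun φ := ⟨⇑e ∘ φ.1, fun x => by
    simp only [comp_apply, φ.2 x]; exact iso_comm e he (φ.1 x)⟩
  invFun ψ := ⟨⇑e.symm ∘ ψ.1, fun x => by
    simp only [comp_apply, ψ.2 x]; exact iso_comm_symm e he (ψ.1 x)⟩
  left_inv φ := Subtype.ext (funext fun x => by simp)
  right_inv ψ := Subtype.ext (funext fun x => by simp)

/-- source iso: Hm equivalence -/
def hmCongrSource {f : α → α} {g : β → β} (e : α ≃ β)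
    (he : ⇑e ∘ f = g ∘ ⇑e) (v : δ → δ) : Hm g v ≃ Hm f v where
  toFun φ := ⟨φ.1 ∘ ⇑e, fun x => by
    simp only [comp_apply, iso_comm e he x]; exact φ.2 (e x)⟩
  invFun ψ := ⟨ψ.1 ∘ ⇑e.symm, fun x => by
    simp only [comp_apply, iso_comm_symm e he x]; exact ψ.2 (e.symm x)⟩
  left_inv φ := Subtype.ext (funext fun x => by simp)
  right_inv ψ := Subtype.ext (funext fun x => by simp)

theorem hc_congr_target {g : β → β} {g' : γ → γ} (h : FddsIso g g') (u : δ → δ) :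
    hc u g = hc u g' := by
  obtain ⟨e, he⟩ := h
  exact Nat.card_congr (hmCongrTarget e he u)

theorem hc_congr_source {f : α → α} {g : β → β} (h : FddsIso f g) (v : δ → δ) :
    hc g v = hc f v := by
  obtain ⟨e, he⟩ := h
  exact Nat.card_congr (hmCongrSource e he v)

theorem ic_congr_source {f : α → α} {g : β → β} (h : FddsIso f g) (v : δ → δ) :
    ic g v = ic f v := by
  obtain ⟨e, he⟩ := h
  refine Nat.card_congr (Equiv.subtypeEquiv (hmCongrSource e he v) fun φ => ?_)
  exact (Injective.of_comp_iff' φ.1 e.bijective).symm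







/-- congruences -/
def Cong (f : α → α) : Type := {s : Setoid α // ∀ x y, s.r x y → s.r (f x) (f y)}

instance congFinite (f : α → α) [Finite α] : Finite (Cong f) := by
  have h1 : Finite (Setoid α) :=
    Finite.of_injective (fun s : Setoid α => s.r) fun s t h =>
      Setoid.ext fun a b => iff_of_eq (congrFun (congrFun h a) b)
  unfold Cong; infer_instance

/-- quotient map -/
def qf {f : α → α} (s : Cong f) : Quotient s.1 → Quotient s.1 :=
  Quotient.map' f (fun x y h => s.2 x y h)

instance (f : α → α) [Finite α] (s : Cong f) : Finite (Quotient s.1) :=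
  Finite.of_surjective (Quotient.mk s.1) Quotient.exists_rep

theorem qf_mk {f : α → α} (s : Cong f) (x : α) :
    qf s (Quotient.mk s.1 x) = Quotient.mk s.1 (f x) := rfl

/-- the sigma decomposition of homs by kernel congruence -/
noncomputable def homKerEquiv (f : α → α) (g : β → β) :
    (Σ s : Cong f, {ψ : Hm (qf s) g // Injective ψ.1}) ≃ Hm f g := by
  refine Equiv.ofBijective (fun p => ⟨p.2.1.1 ∘ Quotient.mk p.1.1, fun x => by
    simp only [comp_apply]
    have := p.2.1.2 (Quotient.mk p.1.1 x)
    rwa [qf_mk] at this⟩) ⟨?_, ?_⟩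
  · rintro ⟨⟨s, hs⟩, ⟨⟨ψ, hψc⟩, hψ⟩⟩ ⟨⟨t, ht⟩, ⟨⟨χ, hχc⟩, hχ⟩⟩ h
    simp only [Injective] at hψ hχ
    have hval : ψ ∘ Quotient.mk s = χ ∘ Quotient.mk t := congrArg Subtype.val h
    have hst : s = t := by
      refine Setoid.ext fun a b => ?_
      constructor
      · intro hab
        have h0 : ψ (Quotient.mk s a) = ψ (Quotient.mk s b) := by
          rw [Quotient.sound hab]
        have ha := congrFun hval a
        have hb := congrFun hval b
        simp only [comp_apply] at ha hb
        have h2 : χ (Quotient.mk t a) = χ (Quotient.mk t b) := by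
          rw [← ha, ← hb]; exact h0
        exact Quotient.exact (hχ h2)
      · intro hab
        have h0 : χ (Quotient.mk t a) = χ (Quotient.mk t b) := by
          rw [Quotient.sound hab]
        have ha := congrFun hval a
        have hb := congrFun hval b
        simp only [comp_apply] at ha hb
        have h2 : ψ (Quotient.mk s a) = ψ (Quotient.mk s b) := by
          rw [ha, hb]; exact h0
        exact Quotient.exact (hψ h2)
    subst hst
    obtain rfl : hs = ht := proof_irrel _ _
    have hfn : ψ = χ := funext fun q => by
      induction q using Quotient.ind with
      | _ a => exact congrFun hval a
    subst hfn
    obtain rfl : hψc = hχc := proof_irrel _ _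
    obtain rfl : hψ = hχ := proof_irrel _ _
    rfl
  · intro φ
    refine ⟨⟨⟨Setoid.ker φ.1, fun x y hxy => ?_⟩, ⟨⟨Quotient.lift φ.1 (fun a b h => h), ?_⟩, ?_⟩⟩, ?_⟩
    · show φ.1 (f x) = φ.1 (f y)
      rw [φ.2 x, φ.2 y]
      exact congrArg g hxy
    · intro q
      induction q using Quotient.ind with
      | _ a => exact φ.2 a
    · intro q r hqr
      induction q using Quotient.ind with
      | _ a =>
        induction r using Quotient.ind with
        | _ b => exact Quotient.sound hqr
    · rfl








theorem nat_card_sigma {ι : Type} [Fintype ι] (F : ι → Type) [∀ i, Finite (F i)] :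
    Nat.card (Σ i, F i) = ∑ i : ι, Nat.card (F i) := by
  classical
  letI : ∀ i, Fintype (F i) := fun i => Fintype.ofFinite _
  simp [Nat.card_eq_fintype_card]

/-- the equality congruence -/
def eqC (f : α → α) : Cong f :=
  ⟨⟨Eq, ⟨fun _ => rfl, fun h => h.symm, fun h1 h2 => h1.trans h2⟩⟩, fun _ _ h => congrArg f h⟩

theorem cong_ne_eqC {f : α → α} (s : Cong f)
    (hs : s ≠ eqC f) : ∃ x y, x ≠ y ∧ s.1.r x y := by
  by_contra hcon
  push_neg at hcon
  apply hs
  refine Subtype.ext (Setoid.ext fun a b => ?_)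
  constructor
  · intro hab
    by_contra hne
    exact hne (by_contra fun hne2 => hne2 (by
      rcases eq_or_ne a b with h | h
      · exact h
      · exact absurd hab (fun hh => h (by
          by_contra hne3
          exact hne3 ((hcon a b hne3) hh).elim))))
  · rintro rfl
    exact s.1.refl a



theorem qf_eqC_iso (f : α → α) : FddsIso (qf (eqC f)) f := by
  refine ⟨⟨Quotient.lift id (fun a b h => h), Quotient.mk _, ?_, ?_⟩, funext fun q => ?_⟩
  · intro q
    induction q using Quotient.ind with
    | _ a => rfl
  · intro a
    rfl
  · induction q using Quotient.ind with
    | _ a => rfl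

theorem card_quotient_lt {δ : Type} [Finite δ] (s : Setoid δ) {x y : δ}
    (hxy : x ≠ y) (hr : s.r x y) : Nat.card (Quotient s) < Nat.card δ := by
  classical
  letI := Fintype.ofFinite δ
  letI : Fintype (Quotient s) := Fintype.ofFinite _
  rw [Nat.card_eq_fintype_card, Nat.card_eq_fintype_card]
  refine Fintype.card_lt_of_surjective_not_injective (Quotient.mk s) Quotient.exists_rep ?_
  intro hinj
  exact hxy (hinj (Quotient.sound hr))

theorem hc_eq_sum_ic {δ : Type} [Finite δ] [Finite β] (u : δ → δ) (g : β → β) :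
    ∀ _ : Fintype (Cong u), hc u g = ∑ s : Cong u, ic (qf s) g := by
  intro _
  classical
  rw [hc, ← Nat.card_congr (homKerEquiv u g)]
  rw [nat_card_sigma]
  rfl

theorem ic_eq_of_hc_eq {α β : Type} [Finite α] [Finite β] (f : α → α) (g : β → β)
    (h : ∀ (δ : Type) [Finite δ] (u : δ → δ), hc u f = hc u g) :
    ∀ (n : ℕ) (δ : Type) [Finite δ] (u : δ → δ), Nat.card δ ≤ n → ic u f = ic u g := by
  intro n
  induction n with
  | zero =>
    intro δ _ u hcard
    have : IsEmpty δ := by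
      rcases Nat.card_eq_zero.mp (Nat.le_zero.mp hcard) with h | h
      · exact h
      · exact absurd ‹Finite δ› h.not_finite
    -- both ic are 1 : unique injective hom from empty
    have h1 : ∀ (β' : Type) (g' : β' → β'), ic u g' = 1 := by
      intro β' g'
      rw [ic, Nat.card_eq_one_iff_unique]
      constructor
      · constructor
        rintro ⟨⟨φ1, hφ1⟩, hφi⟩ ⟨⟨φ2, hφ2⟩, hφi2⟩
        refine Subtype.ext (Subtype.ext (funext fun x => (this.false x).elim))
      · exact ⟨⟨⟨fun x => (this.false x).elim, fun x => (this.false x).elim⟩,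
          fun x => (this.false x).elim⟩⟩
    rw [h1 α f, h1 β g]
  | succ n ih =>
    intro δ _ u hcard
    classical
    letI : Fintype (Cong u) := Fintype.ofFinite _
    have hA := hc_eq_sum_ic u f ‹_›
    have hB := hc_eq_sum_ic u g ‹_›
    have hmem : eqC u ∈ (Finset.univ : Finset (Cong u)) := Finset.mem_univ _
    rw [← Finset.sum_erase_add _ _ hmem] at hA hB
    have hrest : ∑ s ∈ Finset.univ.erase (eqC u), ic (qf s) f
        = ∑ s ∈ Finset.univ.erase (eqC u), ic (qf s) g := by
      refine Finset.sum_congr rfl fun s hs => ?_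
      obtain ⟨x, y, hxy, hr⟩ := cong_ne_eqC s (Finset.ne_of_mem_erase hs)
      have hlt := card_quotient_lt s.1 hxy hr
      exact ih (Quotient s.1) (qf s) (by omega)
    have heqA : ic (qf (eqC u)) f = ic u f := (ic_congr_source (qf_eqC_iso u) f).symm
    have heqB : ic (qf (eqC u)) g = ic u g := (ic_congr_source (qf_eqC_iso u) g).symm
    have hug := h δ u
    omega

theorem lovasz {α β : Type} [Finite α] [Finite β] (f : α → α) (g : β → β)
    (h : ∀ (δ : Type) [Finite δ] (u : δ → δ), hc u f = hc u g) : FddsIso f g := by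
  have key := ic_eq_of_hc_eq f g h
  have hAB : ic f f = ic f g := key (Nat.card α) α f le_rfl
  have hBA : ic g f = ic g g := key (Nat.card β) β g le_rfl
  have hid : 0 < ic f f := by
    rw [ic]
    refine Nat.card_pos_iff.mpr ⟨⟨⟨⟨id, fun x => rfl⟩, fun a b hab => hab⟩⟩, inferInstance⟩
  have hid2 : 0 < ic g g := by
    rw [ic]
    refine Nat.card_pos_iff.mpr ⟨⟨⟨⟨id, fun x => rfl⟩, fun a b hab => hab⟩⟩, inferInstance⟩
  rw [hAB] at hid
  rw [← hBA] at hid2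
  obtain ⟨⟨⟨φ, hφ⟩, hφi⟩⟩ := Nat.card_pos_iff.mp hid
  obtain ⟨⟨⟨ψ, hψ⟩, hψi⟩⟩ := Nat.card_pos_iff.mp hid2
  have hcard : Nat.card α = Nat.card β :=
    le_antisymm (Nat.card_le_card_of_injective φ hφi) (Nat.card_le_card_of_injective ψ hψi)
  classical
  letI := Fintype.ofFinite α
  letI := Fintype.ofFinite β
  have hbij : Function.Bijective φ := by
    rw [Fintype.bijective_iff_injective_and_card]
    exact ⟨hφi, by rw [← Nat.card_eq_fintype_card, ← Nat.card_eq_fintype_card]; exact hcard⟩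
  exact ⟨Equiv.ofBijective φ hbij, funext fun x => hφ x⟩


/-! ### Connectivity -/

def Conn {γ : Type} (u : γ → γ) : Prop :=
  Nonempty γ ∧ ∀ x y, ∃ m n, u^[m] x = u^[n] y

theorem invariant_iterate {γ : Type} {u : γ → γ} {ι : Sort*} (t : γ → ι)
    (ht : ∀ x, t (u x) = t x) : ∀ (m : ℕ) (x), t (u^[m] x) = t x := by
  intro m
  induction m with
  | zero => intro x; rfl
  | succ m ih =>
    intro x
    rw [Function.iterate_succ_apply', ht, ih]

theorem conn_invariant {γ : Type} {u : γ → γ} (hcn : Conn u) {ι : Sort*} (t : γ → ι)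
    (ht : ∀ x, t (u x) = t x) (x y : γ) : t x = t y := by
  obtain ⟨m, n, hmn⟩ := hcn.2 x y
  rw [← invariant_iterate t ht m x, hmn, invariant_iterate t ht n y]

/-! ### Target decompositions -/

def hmProdEquiv {δ β γ : Type} (u : δ → δ) (f : β → β) (g : γ → γ) :
    Hm u (Prod.map f g) ≃ Hm u f × Hm u g where
  toFun φ := (⟨fun x => (φ.1 x).1, fun x => congrArg Prod.fst (φ.2 x)⟩,
              ⟨fun x => (φ.1 x).2, fun x => congrArg Prod.snd (φ.2 x)⟩)
  invFun ψ := ⟨fun x => (ψ.1.1 x, ψ.2.1 x), fun x => Prod.ext (ψ.1.2 x) (ψ.2.2 x)⟩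
  left_inv φ := Subtype.ext (funext fun x => rfl)
  right_inv ψ := rfl

theorem hc_prod {δ β γ : Type} [Finite δ] [Finite β] [Finite γ]
    (u : δ → δ) (f : β → β) (g : γ → γ) :
    hc u (Prod.map f g) = hc u f * hc u g := by
  rw [hc, Nat.card_congr (hmProdEquiv u f g), Nat.card_prod]
  rfl

def hmPowEquiv {δ β : Type} (u : δ → δ) (f : β → β) (k : ℕ) :
    Hm u (fun v : Fin k → β => f ∘ v) ≃ (Fin k → Hm u f) where
  toFun φ := fun j => ⟨fun x => φ.1 x j, fun x => congrFun (φ.2 x) j⟩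
  invFun ψ := ⟨fun x j => (ψ j).1 x, fun x => funext fun j => (ψ j).2 x⟩
  left_inv φ := Subtype.ext (funext fun x => rfl)
  right_inv ψ := rfl

theorem hc_pow {δ β : Type} [Finite δ] [Finite β] (u : δ → δ) (f : β → β) (k : ℕ) :
    hc u (fun v : Fin k → β => f ∘ v) = (hc u f) ^ k := by
  rw [hc, Nat.card_congr (hmPowEquiv u f k), Nat.card_pi]
  simp [hc]

def sigMap {ι : Type} (κ : ι → Type) (t : ∀ i, κ i → κ i) : (Σ i, κ i) → Σ i, κ i :=
  fun x => ⟨x.1, t x.1 x.2⟩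

theorem sigma_eq_of_fst {ι : Type} {κ : ι → Type} (p : Σ i, κ i) (i : ι) (h : p.1 = i) :
    p = ⟨i, h ▸ p.2⟩ := by
  cases p
  subst h
  rfl

noncomputable def hmSigmaEquiv {ι : Type} {κ : ι → Type} (t : ∀ i, κ i → κ i)
    {γ : Type} {u : γ → γ} (hcn : Conn u) :
    Hm u (sigMap κ t) ≃ Σ i, Hm u (t i) := by
  classical
  have x₀ : γ := Classical.choice hcn.1
  have const : ∀ (φ : Hm u (sigMap κ t)) (x : γ), (φ.1 x).1 = (φ.1 x₀).1 := by
    intro φ x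
    refine conn_invariant hcn (fun y => (φ.1 y).1) (fun y => ?_) x x₀
    show (φ.1 (u y)).1 = (φ.1 y).1
    rw [φ.2 y]
    rfl
  refine (Equiv.ofBijective
    (fun p : Σ i, Hm u (t i) => (⟨fun x => ⟨p.1, (p.2).1 x⟩, fun x => by
      show (⟨p.1, (p.2).1 (u x)⟩ : Σ i, κ i) = ⟨p.1, t p.1 ((p.2).1 x)⟩
      rw [(p.2).2 x]⟩ : Hm u (sigMap κ t))) ⟨?_, ?_⟩).symm
  · rintro ⟨i, ψ⟩ ⟨j, χ⟩ h
    have hval := congrArg Subtype.val h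
    simp only at hval
    have hij : i = j := congrArg Sigma.fst (congrFun hval x₀)
    subst hij
    refine Sigma.ext rfl (heq_of_eq (Subtype.ext (funext fun x => ?_)))
    have := congrFun hval x
    exact eq_of_heq (Sigma.ext_iff.mp this).2
  · intro φ
    refine ⟨⟨(φ.1 x₀).1, ⟨fun x => (const φ x) ▸ (φ.1 x).2, ?_⟩⟩, ?_⟩
    · intro x
      have hx : ∀ y, φ.1 y = ⟨(φ.1 x₀).1, (const φ y) ▸ (φ.1 y).2⟩ :=
        fun y => sigma_eq_of_fst (φ.1 y) _ (const φ y)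
      have h1 : φ.1 (u x) = sigMap κ t (φ.1 x) := φ.2 x
      rw [hx (u x), hx x] at h1
      exact eq_of_heq (Sigma.ext_iff.mp h1).2
    · refine Subtype.ext (funext fun x => ?_)
      show (⟨(φ.1 x₀).1, (const φ x) ▸ (φ.1 x).2⟩ : Σ i, κ i) = φ.1 x
      exact (sigma_eq_of_fst (φ.1 x) _ (const φ x)).symm

theorem hc_sigma {ι : Type} [Fintype ι] {κ : ι → Type} [∀ i, Finite (κ i)]
    (t : ∀ i, κ i → κ i) {γ : Type} [Finite γ] {u : γ → γ} (hcn : Conn u) :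
    hc u (sigMap κ t) = ∑ i : ι, hc u (t i) := by
  rw [hc, Nat.card_congr (hmSigmaEquiv t hcn), nat_card_sigma]
  rfl

theorem hc_id_of_conn {γ δ : Type} [Finite γ] [Finite δ] {u : γ → γ} (hcn : Conn u) :
    hc u (id : δ → δ) = Nat.card δ := by
  have x₀ : γ := Classical.choice hcn.1
  refine Nat.card_congr (Equiv.ofBijective (fun φ : Hm u (id : δ → δ) => φ.1 x₀) ⟨?_, ?_⟩)
  · intro φ ψ h
    refine Subtype.ext (funext fun x => ?_)
    rw [conn_invariant hcn φ.1 φ.2 x x₀, conn_invariant hcn ψ.1 ψ.2 x x₀]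
    exact h
  · intro d
    exact ⟨⟨fun _ => d, fun x => rfl⟩, rfl⟩

theorem hc_pos_of_fixpt {γ β : Type} [Finite γ] [Finite β] {u : γ → γ} {g : β → β}
    {b : β} (hb : g b = b) : 0 < hc u g := by
  rw [hc]
  exact Nat.card_pos_iff.mpr ⟨⟨⟨fun _ => b, fun x => hb.symm⟩⟩, inferInstance⟩

/-! ### Components -/

def reachS {γ : Type} (u : γ → γ) : Setoid γ :=
  ⟨fun x y => ∃ m n, u^[m] x = u^[n] y,
   ⟨fun x => ⟨0, 0, rfl⟩,
    fun ⟨m, n, h⟩ => ⟨n, m, h.symm⟩,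
    fun {x y z} ⟨m, n, h1⟩ ⟨m', n', h2⟩ => ⟨m' + m, n + n', by
      rw [Function.iterate_add_apply, h1, ← Function.iterate_add_apply,
        Nat.add_comm m' n, Function.iterate_add_apply, h2,
        ← Function.iterate_add_apply]⟩⟩⟩

def Comp {γ : Type} (u : γ → γ) (c : Quotient (reachS u)) : Type :=
  {x // Quotient.mk (reachS u) x = c}

instance {γ : Type} [Finite γ] (u : γ → γ) (c : Quotient (reachS u)) : Finite (Comp u c) := by
  unfold Comp; infer_instance

theorem reach_u {γ : Type} (u : γ → γ) (x : γ) :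
    Quotient.mk (reachS u) (u x) = Quotient.mk (reachS u) x :=
  Quotient.sound ⟨0, 1, rfl⟩

def compMap {γ : Type} (u : γ → γ) (c : Quotient (reachS u)) : Comp u c → Comp u c :=
  fun x => ⟨u x.1, by rw [reach_u, x.2]⟩

theorem compMap_iterate {γ : Type} (u : γ → γ) (c : Quotient (reachS u)) :
    ∀ (m : ℕ) (x : Comp u c), ((compMap u c)^[m] x).1 = u^[m] x.1 := by
  intro m
  induction m with
  | zero => intro x; rfl
  | succ m ih =>
    intro x
    rw [Function.iterate_succ_apply', Function.iterate_succ_apply']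
    show u (((compMap u c)^[m] x).1) = _
    rw [ih]

theorem conn_compMap {γ : Type} (u : γ → γ) (c : Quotient (reachS u)) :
    Conn (compMap u c) := by
  obtain ⟨x, hx⟩ := Quotient.exists_rep c
  refine ⟨⟨⟨x, hx⟩⟩, ?_⟩
  rintro ⟨a, ha⟩ ⟨b, hb⟩
  have : (reachS u).r a b := Quotient.exact (ha.trans hb.symm)
  obtain ⟨m, n, hmn⟩ := this
  exact ⟨m, n, Subtype.ext ((compMap_iterate u c m ⟨a, ha⟩).trans (hmn.trans (compMap_iterate u c n ⟨b, hb⟩).symm))⟩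

theorem comp_cast {γ β : Type} {u : γ → γ} {g : β → β}
    (Φ : ∀ c, Hm (compMap u c) g) {c c' : Quotient (reachS u)} (h : c = c')
    (x : γ) (hx : Quotient.mk (reachS u) x = c) (hx' : Quotient.mk (reachS u) x = c') :
    (Φ c).1 ⟨x, hx⟩ = (Φ c').1 ⟨x, hx'⟩ := by
  subst h
  rfl

noncomputable def hmCompEquiv {γ β : Type} (u : γ → γ) (g : β → β) :
    Hm u g ≃ ∀ c, Hm (compMap u c) g where
  toFun φ := fun c => ⟨fun x => φ.1 x.1, fun x => φ.2 x.1⟩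
  invFun Φ := ⟨fun x => (Φ (Quotient.mk (reachS u) x)).1 ⟨x, rfl⟩, fun x => by
    show (Φ (Quotient.mk (reachS u) (u x))).1 ⟨u x, rfl⟩
        = g ((Φ (Quotient.mk (reachS u) x)).1 ⟨x, rfl⟩)
    have h1 : (Φ (Quotient.mk (reachS u) (u x))).1 ⟨u x, rfl⟩
        = (Φ (Quotient.mk (reachS u) x)).1 ⟨u x, reach_u u x⟩ :=
      comp_cast Φ (reach_u u x) (u x) rfl (reach_u u x)
    rw [h1]
    exact (Φ (Quotient.mk (reachS u) x)).2 ⟨x, rfl⟩⟩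
  left_inv φ := Subtype.ext (funext fun x => rfl)
  right_inv Φ := by
    funext c
    refine Subtype.ext (funext fun x => ?_)
    show (Φ (Quotient.mk (reachS u) x.1)).1 ⟨x.1, rfl⟩ = (Φ c).1 x
    rw [comp_cast Φ x.2 x.1 rfl x.2]
    rfl

theorem hc_eq_of_conn_eq {γ β β' : Type} [Finite γ] [Finite β] [Finite β']
    (u : γ → γ) (g : β → β) (g' : β' → β')
    (h : ∀ c, hc (compMap u c) g = hc (compMap u c) g') :
    hc u g = hc u g' := by
  classical
  letI : Fintype (Quotient (reachS u)) := Fintype.ofFinite _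
  rw [hc, Nat.card_congr (hmCompEquiv u g), Nat.card_pi,
      hc, Nat.card_congr (hmCompEquiv u g'), Nat.card_pi]
  exact Finset.prod_congr rfl fun c _ => h c


/-! ### Iterates of homomorphisms -/

theorem hm_iter {γ β : Type} {u : γ → γ} {g : β → β} (φ : Hm u g) :
    ∀ (k : ℕ) (x : γ), φ.1 (u^[k] x) = g^[k] (φ.1 x) := by
  intro k
  induction k with
  | zero => intro x; rfl
  | succ k ih =>
    intro x
    rw [Function.iterate_succ_apply', Function.iterate_succ_apply', φ.2, ih]

theorem add_one_iter {d : ℕ} [NeZero d] : ∀ (k : ℕ) (w : ZMod d),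
    (fun z : ZMod d => z + 1)^[k] w = w + (k : ZMod d) := by
  intro k
  induction k with
  | zero => intro w; simp
  | succ k ih =>
    intro w
    rw [Function.iterate_succ_apply', ih]
    push_cast
    ring

/-! ### The period of a connected finite system -/

theorem conn_period {γ : Type} [Finite γ] {u : γ → γ} (hcn : Conn u) :
    ∃ p : ℕ, 0 < p ∧
      (∀ (d : ℕ), d ≠ 0 → hc u (fun z : ZMod d => z + 1) = if d ∣ p then d else 0) ∧
      (∀ (β : Type) (g : β → β), Nonempty (Hm u g) →
        ∃ b, 0 < Function.minimalPeriod g b ∧ Function.minimalPeriod g b ∣ p) ∧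
      (∃ x₀ : γ, p = Function.minimalPeriod u x₀) := by
  classical
  obtain ⟨x⟩ := hcn.1
  -- find a periodic point x₀
  obtain ⟨a0, b0, hab, hfe⟩ := Finite.exists_ne_map_eq_of_infinite (fun k : ℕ => u^[k] x)
  have hper0 : ∃ (y : γ) (q : ℕ), 0 < q ∧ u^[q] y = y := by
    rcases Nat.lt_or_ge a0 b0 with h | h
    · refine ⟨u^[a0] x, b0 - a0, by omega, ?_⟩
      rw [← Function.iterate_add_apply]
      have : b0 - a0 + a0 = b0 := by omega
      rw [this]
      exact hfe.symm
    · have h' : b0 < a0 := by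
        rcases Nat.lt_or_ge b0 a0 with h2 | h2
        · exact h2
        · omega
      refine ⟨u^[b0] x, a0 - b0, by omega, ?_⟩
      rw [← Function.iterate_add_apply]
      have : a0 - b0 + b0 = a0 := by omega
      rw [this]
      exact hfe
  obtain ⟨x₀, q, hq, hqx⟩ := hper0
  have hperq : Function.IsPeriodicPt u q x₀ := hqx
  set p := Function.minimalPeriod u x₀ with hpdef
  have hp : 0 < p := hperq.minimalPeriod_pos hq
  have hx₀p : Function.IsPeriodicPt u p x₀ := Function.isPeriodicPt_minimalPeriod u x₀
  have hmulk : ∀ k : ℕ, u^[p * k] x₀ = x₀ := fun k => hx₀p.mul_const k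
  -- key: iterates agree iff congruent mod p
  have keyNat : ∀ a b : ℕ, a ≤ b → u^[a] x₀ = u^[b] x₀ → p ∣ b - a := by
    intro a b hle he
    have h1 : u^[a * p - a + a] x₀ = u^[a * p - a + b] x₀ := by
      rw [Function.iterate_add_apply, Function.iterate_add_apply, he]
    have ha : a ≤ a * p := Nat.le_mul_of_pos_right a hp
    have h2 : a * p - a + a = a * p := by omega
    rw [h2] at h1
    have h3 : u^[a * p] x₀ = x₀ := by
      rw [Nat.mul_comm]; exact hmulk a
    have h4 : Function.IsPeriodicPt u (a * p - a + b) x₀ := by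
      show u^[a * p - a + b] x₀ = x₀
      rw [← h1, h3]
    have h5 : p ∣ a * p - a + b := h4.minimalPeriod_dvd
    have h6 : a * p - a + b = a * p + (b - a) := by omega
    rw [h6] at h5
    have h7 : p ∣ a * p := ⟨a, Nat.mul_comm a p⟩
    exact (Nat.dvd_add_right h7).mp h5
  have keyNat2 : ∀ a b : ℕ, a ≤ b → p ∣ b - a → u^[a] x₀ = u^[b] x₀ := by
    intro a b hle hdvd
    obtain ⟨k, hk⟩ := hdvd
    have hb : b = a + p * k := by omega
    rw [hb, Function.iterate_add_apply]
    rw [hmulk k]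
  -- cast version
  have eqcast : ∀ (d : ℕ), d ∣ p → ∀ a b : ℕ, u^[a] x₀ = u^[b] x₀ →
      ((a : ZMod d)) = (b : ZMod d) := by
    intro d hdp a b he
    rcases Nat.le_total a b with hle | hle
    · have := keyNat a b hle he
      have hd : d ∣ b - a := dvd_trans hdp this
      have : (b : ZMod d) = ((a + (b - a) : ℕ) : ZMod d) := by
        congr 1
        omega
      rw [this]
      push_cast
      rw [(ZMod.natCast_eq_zero_iff (b - a) d).mpr hd]
      ring
    · have := keyNat b a hle he.symm
      have hd : d ∣ a - b := dvd_trans hdp this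
      have : (a : ZMod d) = ((b + (a - b) : ℕ) : ZMod d) := by
        congr 1
        omega
      rw [this]
      push_cast
      rw [(ZMod.natCast_eq_zero_iff (a - b) d).mpr hd]
      ring
  have reach : ∀ y, ∃ m n, u^[m] y = u^[n] x₀ := fun y => hcn.2 y x₀
  refine ⟨p, hp, ?_, ?_, ⟨x₀, hpdef⟩⟩
  · -- cycle counts
    intro d hd0
    haveI : NeZero d := ⟨hd0⟩
    by_cases hdp : d ∣ p
    · rw [if_pos hdp]
      have hEq : Hm u (fun z : ZMod d => z + 1) ≃ ZMod d := by
        have determined : ∀ (φ : Hm u (fun z : ZMod d => z + 1)) (y : γ) (m n : ℕ),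
            u^[m] y = u^[n] x₀ → φ.1 y + (m : ZMod d) = φ.1 x₀ + (n : ZMod d) := by
          intro φ y m n he
          have h1 : φ.1 (u^[m] y) = φ.1 y + (m : ZMod d) := by
            rw [hm_iter φ m y, add_one_iter]
          have h2 : φ.1 (u^[n] x₀) = φ.1 x₀ + (n : ZMod d) := by
            rw [hm_iter φ n x₀, add_one_iter]
          rw [← h1, ← h2, he]
        refine Equiv.ofBijective (fun φ => φ.1 x₀) ⟨?_, ?_⟩
        · intro φ ψ h
          refine Subtype.ext (funext fun y => ?_)
          obtain ⟨m, n, he⟩ := reach y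
          have d1 := determined φ y m n he
          have d2 := determined ψ y m n he
          have : φ.1 y + (m : ZMod d) = ψ.1 y + (m : ZMod d) := by
            rw [d1, d2]
            have h' : φ.1 x₀ = ψ.1 x₀ := h
            rw [h']
          exact add_right_cancel this
        · intro z₀
          set M : γ → ℕ := fun y => (reach y).choose with hM
          have hN : ∀ y, ∃ n, u^[M y] y = u^[n] x₀ := fun y => (reach y).choose_spec
          set N : γ → ℕ := fun y => (hN y).choose with hNdef
          have hMN : ∀ y, u^[M y] y = u^[N y] x₀ := fun y => (hN y).choose_spec
          refine ⟨⟨fun y => z₀ + (N y : ZMod d) - (M y : ZMod d), ?_⟩, ?_⟩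
          · intro y
            -- core congruence
            have e1 : u^[M y] y = u^[N y] x₀ := hMN y
            have e2 : u^[M (u y) + 1] y = u^[N (u y)] x₀ := by
              rw [Function.iterate_succ_apply]
              exact hMN (u y)
            have e3 : u^[M (u y) + 1 + N y] x₀ = u^[M y + N (u y)] x₀ := by
              have f1 : u^[M (u y) + 1] (u^[M y] y) = u^[M (u y) + 1] (u^[N y] x₀) := by
                rw [e1]
              rw [← Function.iterate_add_apply, ← Function.iterate_add_apply] at f1
              have f2 : u^[M y] (u^[M (u y) + 1] y) = u^[M y] (u^[N (u y)] x₀) := by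
                rw [e2]
              rw [← Function.iterate_add_apply, ← Function.iterate_add_apply] at f2
              have f3 : M (u y) + 1 + M y = M y + (M (u y) + 1) := by omega
              rw [f3] at f1
              rw [← f1, ← f2]
            have e4 := eqcast d hdp _ _ e3
            push_cast at e4
            show z₀ + (N (u y) : ZMod d) - (M (u y) : ZMod d)
                = (z₀ + (N y : ZMod d) - (M y : ZMod d)) + 1
            linear_combination -e4
          · show z₀ + (N x₀ : ZMod d) - (M x₀ : ZMod d) = z₀
            have e1 : u^[M x₀] x₀ = u^[N x₀] x₀ := hMN x₀
            have e2 := eqcast d hdp _ _ e1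
            rw [e2]
            ring
      rw [hc, Nat.card_congr hEq, Nat.card_zmod]
    · rw [if_neg hdp]
      rw [hc]
      have : IsEmpty (Hm u (fun z : ZMod d => z + 1)) := by
        constructor
        intro φ
        have h1 : φ.1 (u^[p] x₀) = φ.1 x₀ + (p : ZMod d) := by
          rw [hm_iter φ p x₀, add_one_iter]
        rw [hx₀p] at h1
        have h2 : (p : ZMod d) = 0 := by
          have := h1.symm
          have h3 : φ.1 x₀ + (p : ZMod d) = φ.1 x₀ + 0 := by rw [add_zero]; exact this
          exact add_left_cancel h3
        exact hdp ((ZMod.natCast_eq_zero_iff p d).mp h2)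
      exact Nat.card_of_isEmpty
  · -- minimal periods of images
    intro β' g hne
    obtain ⟨φ⟩ := hne
    refine ⟨φ.1 x₀, ?_, ?_⟩
    · have : Function.IsPeriodicPt g p (φ.1 x₀) := by
        show g^[p] (φ.1 x₀) = φ.1 x₀
        rw [← hm_iter φ p x₀, hx₀p]
      exact this.minimalPeriod_pos hp
    · have : Function.IsPeriodicPt g p (φ.1 x₀) := by
        show g^[p] (φ.1 x₀) = φ.1 x₀
        rw [← hm_iter φ p x₀, hx₀p]
      exact this.minimalPeriod_dvd


/-! ### Arithmetic: inverted indicator coefficients -/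

open Classical in
noncomputable def NpF (L : Finset ℕ) (c : ℕ) : ℤ :=
  if ∃ a ∈ L, a ∣ c then 0 else 1

noncomputable def uu (L : Finset ℕ) : ℕ → ℤ
  | d => NpF L d - ∑ g ∈ d.properDivisors.attach, uu L g.1
termination_by d => d
decreasing_by exact (Nat.mem_properDivisors.mp g.2).2

theorem uu_spec (L : Finset ℕ) (d : ℕ) (hd : d ≠ 0) :
    ∑ g ∈ d.divisors, uu L g = NpF L d := by
  rw [← Nat.insert_self_properDivisors hd]
  rw [Finset.sum_insert (fun hmem => absurd (Nat.mem_properDivisors.mp hmem).2 (lt_irrefl d))]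
  rw [uu]
  rw [← Finset.sum_attach d.properDivisors (fun g => uu L g)]
  ring

noncomputable def eps (L : Finset ℕ) (d : ℕ) : ℤ := ((L.lcm id) / d : ℕ) * uu L d
noncomputable def bB (L : Finset ℕ) (d : ℕ) : ℕ := (eps L d).toNat
noncomputable def bC (L : Finset ℕ) (d : ℕ) : ℕ := (-(eps L d)).toNat

theorem bB_sub_bC (L : Finset ℕ) (d : ℕ) : (bB L d : ℤ) - (bC L d : ℤ) = eps L d :=
  Int.toNat_sub_toNat_neg (eps L d)

theorem lcm_ne_zero (L : Finset ℕ) (hL : ∀ a ∈ L, 2 ≤ a) : L.lcm id ≠ 0 := by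
  intro h
  rw [Finset.lcm_eq_zero_iff] at h
  obtain ⟨a, ha, ha0⟩ := h
  have := hL a ha
  simp only [id] at ha0
  omega

/-- The key divisor-sum computation. -/
theorem eps_sum (L : Finset ℕ) (hL : ∀ a ∈ L, 2 ≤ a) (p : ℕ) :
    ∑ d ∈ (L.lcm id).divisors, eps L d * (if d ∣ p then (d : ℤ) else 0)
      = ((L.lcm id : ℕ) : ℤ) * NpF L (Nat.gcd (L.lcm id) p) := by
  classical
  set n := L.lcm id with hn
  have hn0 : n ≠ 0 := lcm_ne_zero L hL
  have h1 : ∑ d ∈ n.divisors, eps L d * (if d ∣ p then (d : ℤ) else 0)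
      = ∑ d ∈ n.divisors.filter (· ∣ p), eps L d * d := by
    rw [Finset.sum_filter]
    refine Finset.sum_congr rfl fun d _ => ?_
    by_cases h : d ∣ p
    · rw [if_pos h, if_pos h]
    · rw [if_neg h, if_neg h, mul_zero]
  rw [h1]
  have h2 : n.divisors.filter (· ∣ p) = (Nat.gcd n p).divisors := by
    ext d
    simp only [Finset.mem_filter, Nat.mem_divisors]
    constructor
    · rintro ⟨⟨hdn, _⟩, hdp⟩
      exact ⟨Nat.dvd_gcd hdn hdp, Nat.gcd_ne_zero_left hn0⟩
    · rintro ⟨hdg, _⟩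
      exact ⟨⟨hdg.trans (Nat.gcd_dvd_left n p), hn0⟩, hdg.trans (Nat.gcd_dvd_right n p)⟩
  rw [h2]
  have h3 : ∀ d ∈ (Nat.gcd n p).divisors, eps L d * d = (n : ℤ) * uu L d := by
    intro d hd
    have hdn : d ∣ n := (Nat.mem_divisors.mp hd).1.trans (Nat.gcd_dvd_left n p)
    have hcast : ((n / d : ℕ) : ℤ) * (d : ℤ) = (n : ℤ) := by
      exact_mod_cast congrArg (Nat.cast (R := ℤ)) (Nat.div_mul_cancel hdn)
    rw [eps]
    calc ((n / d : ℕ) : ℤ) * uu L d * d = ((n / d : ℕ) : ℤ) * d * uu L d := by ring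
    _ = (n : ℤ) * uu L d := by rw [hcast]
  rw [Finset.sum_congr rfl h3, ← Finset.mul_sum]
  congr 1
  exact uu_spec L _ (Nat.gcd_ne_zero_left hn0)

theorem NpF_eq_zero (L : Finset ℕ) {c : ℕ} (h : ∃ a ∈ L, a ∣ c) : NpF L c = 0 := by
  rw [NpF, if_pos h]

theorem NpF_one (L : Finset ℕ) (hL : ∀ a ∈ L, 2 ≤ a) : NpF L 1 = 1 := by
  rw [NpF, if_neg]
  rintro ⟨a, ha, hdvd⟩
  have := hL a ha
  have := Nat.le_of_dvd one_pos hdvd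
  omega

theorem sum_diff (L : Finset ℕ) (hL : ∀ a ∈ L, 2 ≤ a) (p : ℕ) :
    ((∑ d ∈ (L.lcm id).divisors, bB L d * (if d ∣ p then d else 0) : ℕ) : ℤ)
      - ((∑ d ∈ (L.lcm id).divisors, bC L d * (if d ∣ p then d else 0) : ℕ) : ℤ)
      = ((L.lcm id : ℕ) : ℤ) * NpF L (Nat.gcd (L.lcm id) p) := by
  push_cast
  rw [← Finset.sum_sub_distrib]
  rw [← eps_sum L hL p]
  refine Finset.sum_congr rfl fun d _ => ?_
  rw [← bB_sub_bC]
  by_cases h : d ∣ p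
  · simp only [if_pos h]
    ring
  · simp only [if_neg h]
    ring

/-! ### Sums of cycles -/

def CY (n : ℕ) (b : ℕ → ℕ) : Type :=
  Σ d : {d : ℕ // d ∈ n.divisors}, Fin (b d.1) × ZMod d.1

noncomputable def cyMap (n : ℕ) (b : ℕ → ℕ) : CY n b → CY n b :=
  sigMap _ (fun d => Prod.map id (fun z : ZMod d.1 => z + 1))

theorem CY_fin_fiber (n : ℕ) (b : ℕ → ℕ) : ∀ (d : {d : ℕ // d ∈ n.divisors}),
    Finite (Fin (b d.1) × ZMod d.1) := by
  intro d
  haveI : NeZero d.1 := ⟨(Nat.pos_of_mem_divisors d.2).ne'⟩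
  infer_instance

instance (n : ℕ) (b : ℕ → ℕ) : Finite (CY n b) := by
  haveI := CY_fin_fiber n b
  unfold CY
  infer_instance

theorem hc_CY {γ : Type} [Finite γ] {u : γ → γ} (hcn : Conn u) (n : ℕ) (b : ℕ → ℕ)
    (p : ℕ)
    (hcyc : ∀ d : ℕ, d ≠ 0 → hc u (fun z : ZMod d => z + 1) = if d ∣ p then d else 0) :
    hc u (cyMap n b) = ∑ d ∈ n.divisors, b d * (if d ∣ p then d else 0) := by
  classical
  haveI := CY_fin_fiber n b
  rw [show hc u (cyMap n b) = _ from hc_sigma (κ := fun d : {d : ℕ // d ∈ n.divisors} => Fin (b d.1) × ZMod d.1)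
    (fun d => Prod.map id (fun z : ZMod d.1 => z + 1)) hcn]
  rw [← Finset.sum_coe_sort n.divisors (fun d => b d * (if d ∣ p then d else 0))]
  refine Finset.sum_congr rfl fun d _ => ?_
  haveI : NeZero d.1 := ⟨(Nat.pos_of_mem_divisors d.2).ne'⟩
  have h1 : hc u (Prod.map (id : Fin (b d.1) → Fin (b d.1)) (fun z : ZMod d.1 => z + 1))
      = hc u (id : Fin (b d.1) → Fin (b d.1)) * hc u (fun z : ZMod d.1 => z + 1) :=
    hc_prod u _ _
  rw [h1, hc_id_of_conn hcn, hcyc d.1 (Nat.pos_of_mem_divisors d.2).ne',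
    Nat.card_eq_fintype_card, Fintype.card_fin]

theorem conn_punit : Conn (id : PUnit → PUnit) :=
  ⟨⟨PUnit.unit⟩, fun x y => ⟨0, 0, by
    show x = y
    exact Subsingleton.elim x y⟩⟩

/-! ### The counterexample construction -/

theorem constr (L : Finset ℕ) (hL : ∀ a ∈ L, 2 ≤ a) :
    ∃ (X Y : Type) (fX : X → X) (fY : Y → Y), Finite X ∧ Finite Y ∧
      (∀ (γ : Type) [Finite γ] (u : γ → γ), Conn u →
        ∀ p : ℕ, 0 < p →
          (∀ d : ℕ, d ≠ 0 → hc u (fun z : ZMod d => z + 1) = if d ∣ p then d else 0) →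
          (∃ a ∈ L, a ∣ p) → hc u fX = hc u fY) ∧
      ¬ FddsIso fX fY := by
  classical
  set n := L.lcm id with hn
  have hn0 : n ≠ 0 := lcm_ne_zero L hL
  refine ⟨CY n (bB L), CY n (bC L), cyMap n (bB L), cyMap n (bC L),
    inferInstance, inferInstance, ?_, ?_⟩
  · intro γ _ u hcn p hp hcyc hap
    rw [hc_CY hcn n (bB L) p hcyc, hc_CY hcn n (bC L) p hcyc]
    have hzero : NpF L (Nat.gcd n p) = 0 := by
      refine NpF_eq_zero L ?_
      obtain ⟨a, haL, hadvd⟩ := hap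
      exact ⟨a, haL, Nat.dvd_gcd (Finset.dvd_lcm haL) hadvd⟩
    have hdiff := sum_diff L hL p
    rw [hzero, mul_zero] at hdiff
    have := sub_eq_zero.mp hdiff
    exact_mod_cast this
  · intro hiso
    have hcount := hc_congr_target hiso (id : PUnit → PUnit)
    obtain ⟨p, hp, hcyc, _, hx₀⟩ := conn_period conn_punit
    have hp1 : p = 1 := by
      obtain ⟨x₀, hx⟩ := hx₀
      rw [hx, Function.minimalPeriod_id]
    rw [hc_CY conn_punit n (bB L) p hcyc, hc_CY conn_punit n (bC L) p hcyc] at hcount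
    have hdiff := sum_diff L hL p
    rw [hcount, sub_self] at hdiff
    rw [hp1, Nat.gcd_one_right, NpF_one L hL] at hdiff
    rw [mul_one] at hdiff
    exact hn0 (by exact_mod_cast hdiff.symm)


/-! ### High-level lemmas -/

theorem lovasz_of_conn {X Y : Type} [Finite X] [Finite Y] (fX : X → X) (fY : Y → Y)
    (h : ∀ (γ : Type) [Finite γ] (u : γ → γ), Conn u → hc u fX = hc u fY) :
    FddsIso fX fY :=
  lovasz fX fY (fun δ _ u => hc_eq_of_conn_eq u fX fY (fun c => h _ (compMap u c) (conn_compMap u c)))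

theorem cancel_of_fixpt {τ B C : Type} [Finite τ] [Finite B] [Finite C] (w : τ → τ) {e : τ}
    (he : w e = e) (g : B → B) (h : C → C)
    (hiso : FddsIso (Prod.map w g) (Prod.map w h)) : FddsIso g h := by
  apply lovasz_of_conn
  intro γ _ u hcn
  have h1 : hc u w * hc u g = hc u w * hc u h := by
    rw [← hc_prod, ← hc_prod]
    exact hc_congr_target hiso u
  exact Nat.eq_of_mul_eq_mul_left (hc_pos_of_fixpt (u := u) he) h1

noncomputable def Lw {τ : Type} [Fintype τ] (w : τ → τ) : Finset ℕ :=
  (Finset.univ.image (Function.minimalPeriod w)).erase 0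

theorem Lw_two_le {τ : Type} [Fintype τ] (w : τ → τ) (hnf : ∀ t, w t ≠ t) :
    ∀ a ∈ Lw w, 2 ≤ a := by
  intro a ha
  rw [Lw, Finset.mem_erase] at ha
  obtain ⟨ha0, hmem⟩ := ha
  rw [Finset.mem_image] at hmem
  obtain ⟨t, _, ht⟩ := hmem
  rcases Nat.lt_or_ge a 2 with h2 | h2
  · exfalso
    have ha1 : a = 1 := by omega
    rw [ha1] at ht
    have : Function.IsFixedPt w t := Function.minimalPeriod_eq_one_iff_isFixedPt.mp ht
    exact hnf t this
  · exact h2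

theorem Lw_mem {τ : Type} [Fintype τ] (w : τ → τ) {b : τ}
    (hb : 0 < Function.minimalPeriod w b) : Function.minimalPeriod w b ∈ Lw w := by
  rw [Lw, Finset.mem_erase]
  exact ⟨hb.ne', Finset.mem_image.mpr ⟨b, Finset.mem_univ b, rfl⟩⟩

theorem nofix_noncancel {τ : Type} [Fintype τ] (w : τ → τ) (hnf : ∀ t, w t ≠ t) :
    ∃ (X Y : Type) (fX : X → X) (fY : Y → Y), Finite X ∧ Finite Y ∧
      FddsIso (Prod.map w fX) (Prod.map w fY) ∧ ¬ FddsIso fX fY := by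
  obtain ⟨X, Y, fX, fY, hFX, hFY, hkey, hniso⟩ := constr (Lw w) (Lw_two_le w hnf)
  refine ⟨X, Y, fX, fY, hFX, hFY, ?_, hniso⟩
  haveI := hFX; haveI := hFY
  apply lovasz_of_conn
  intro γ _ u hcn
  rw [hc_prod, hc_prod]
  rcases Nat.eq_zero_or_pos (hc u w) with h0 | hp
  · rw [h0, Nat.zero_mul, Nat.zero_mul]
  · obtain ⟨p, hppos, hcyc, hmin, _⟩ := conn_period hcn
    obtain ⟨b, hb1, hb2⟩ := hmin τ w (Nat.card_pos_iff.mp hp).1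
    congr 1
    exact hkey γ u hcn p hppos hcyc ⟨_, Lw_mem w hb1, hb2⟩

theorem hc_polyEval {m : ℕ} {γ : Fin (m + 1) → Type} [∀ i, Fintype (γ i)]
    (g : ∀ i, γ i → γ i) {α : Type} [Finite α] (f : α → α)
    {δ : Type} [Finite δ] {u : δ → δ} (hcn : Conn u) :
    hc u (polyEval g f) = ∑ i : Fin (m + 1), hc u (g i) * (hc u f) ^ i.val := by
  have hrfl : polyEval g f = sigMap (fun i : Fin (m + 1) => γ i × (Fin i.val → α))
      (fun i => Prod.map (g i) (fun v => f ∘ v)) := rfl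
  rw [hrfl, hc_sigma _ hcn]
  refine Finset.sum_congr rfl fun i _ => ?_
  rw [hc_prod]
  congr 1
  exact hc_pow u f i.val

theorem nat_poly_cancel {k : ℕ} (c : Fin k → ℕ) (a b : ℕ) (j : Fin k)
    (hj : 1 ≤ j.val) (hcj : 0 < c j)
    (h : ∑ i, c i * a ^ i.val = ∑ i, c i * b ^ i.val) : a = b := by
  rcases Nat.lt_trichotomy a b with hlt | heq | hgt
  · exfalso
    have : ∑ i : Fin k, c i * a ^ i.val < ∑ i : Fin k, c i * b ^ i.val := by
      refine Finset.sum_lt_sum (fun i _ => ?_) ⟨j, Finset.mem_univ j, ?_⟩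
      · exact Nat.mul_le_mul (le_refl (c i)) (Nat.pow_le_pow_left hlt.le i.val)
      · have hpow : a ^ j.val < b ^ j.val := Nat.pow_lt_pow_left hlt (by omega)
        exact mul_lt_mul_of_pos_left hpow hcj
    omega
  · exact heq
  · exfalso
    have : ∑ i : Fin k, c i * b ^ i.val < ∑ i : Fin k, c i * a ^ i.val := by
      refine Finset.sum_lt_sum (fun i _ => ?_) ⟨j, Finset.mem_univ j, ?_⟩
      · exact Nat.mul_le_mul (le_refl (c i)) (Nat.pow_le_pow_left hgt.le i.val)
      · have hpow : b ^ j.val < a ^ j.val := Nat.pow_lt_pow_left hgt (by omega)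
        exact mul_lt_mul_of_pos_left hpow hcj
    omega

end FddsAux

/-- A polynomial `P = Σ_{i=0}^m A_i X^i` over FDDS is injective up to
isomorphism iff at least one non-constant coefficient `A_i` (`i ≥ 1`) is cancelable. -/
theorem poly_injective_iff_cancelable_coeff {m : ℕ} {γ : Fin (m + 1) → Type}
    [∀ i, Fintype (γ i)] (g : ∀ i, γ i → γ i) :
    (∀ (α β : Type) [Fintype α] [Fintype β] (f : α → α) (f' : β → β),
      FddsIso (polyEval g f) (polyEval g f') → FddsIso f f')
    ↔ (∃ i : Fin (m + 1), 1 ≤ i.val ∧ Cancelable (g i)) := by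
  constructor
  · intro hinj
    by_contra hno
    push_neg at hno
    have hnf : ∀ (i : Fin (m + 1)), 1 ≤ i.val → ∀ e, g i e ≠ e := by
      intro i hi e he
      refine hno i hi ?_
      intro B C _ _ gg hh hiso
      exact FddsAux.cancel_of_fixpt (g i) he gg hh hiso
    classical
    set L : Finset ℕ := Finset.biUnion (Finset.univ.filter (fun i : Fin (m + 1) => 1 ≤ i.val))
      (fun i => FddsAux.Lw (g i)) with hLdef
    have hL2 : ∀ a ∈ L, 2 ≤ a := by
      intro a ha
      rw [hLdef, Finset.mem_biUnion] at ha
      obtain ⟨i, hi, hai⟩ := ha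
      exact FddsAux.Lw_two_le (g i) (hnf i (Finset.mem_filter.mp hi).2) a hai
    obtain ⟨X, Y, fX, fY, hFX, hFY, hkey, hniso⟩ := FddsAux.constr L hL2
    haveI := hFX; haveI := hFY
    letI : Fintype X := Fintype.ofFinite X
    letI : Fintype Y := Fintype.ofFinite Y
    apply hniso
    apply hinj X Y fX fY
    apply FddsAux.lovasz_of_conn
    intro γ' _ u hcn
    rw [FddsAux.hc_polyEval g fX hcn, FddsAux.hc_polyEval g fY hcn]
    obtain ⟨p, hppos, hcyc, hmin, _⟩ := FddsAux.conn_period hcn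
    refine Finset.sum_congr rfl fun i _ => ?_
    rcases Nat.eq_zero_or_pos i.val with hi0 | hi1
    · rw [hi0, pow_zero, pow_zero]
    · rcases Nat.eq_zero_or_pos (FddsAux.hc u (g i)) with h0 | hp
      · rw [h0, Nat.zero_mul, Nat.zero_mul]
      · obtain ⟨b, hb1, hb2⟩ := hmin (γ i) (g i) (Nat.card_pos_iff.mp hp).1
        have ha : Function.minimalPeriod (g i) b ∈ L := by
          rw [hLdef, Finset.mem_biUnion]
          exact ⟨i, Finset.mem_filter.mpr ⟨Finset.mem_univ i, hi1⟩, FddsAux.Lw_mem (g i) hb1⟩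
        rw [hkey γ' u hcn p hppos hcyc ⟨_, ha, hb2⟩]
  · rintro ⟨j, hj, hcanc⟩
    intro α β _ _ f f' hiso
    have hfix : ∃ e, g j e = e := by
      by_contra hnf
      push_neg at hnf
      obtain ⟨X, Y, fX, fY, hFX, hFY, hprod, hniso⟩ := FddsAux.nofix_noncancel (g j) hnf
      haveI := hFX; haveI := hFY
      letI : Fintype X := Fintype.ofFinite X
      letI : Fintype Y := Fintype.ofFinite Y
      exact hniso (hcanc X Y fX fY hprod)
    obtain ⟨e, he⟩ := hfix
    apply FddsAux.lovasz_of_conn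
    intro γ' _ u hcn
    have hpe := FddsAux.hc_congr_target hiso u
    rw [FddsAux.hc_polyEval g f hcn, FddsAux.hc_polyEval g f' hcn] at hpe
    exact FddsAux.nat_poly_cancel (fun i => FddsAux.hc u (g i)) (FddsAux.hc u f)
      (FddsAux.hc u f') j hj (FddsAux.hc_pos_of_fixpt (u := u) he) hpe
end
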